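/- arXiv:2403.15877 — 4 statements merged into one kernel-verified Lean document; each statement's English description precedes it below -/
import Mathlib

section
/- (IPSS main bound, abstract form) Let S ⊆ {1,...,p}, τ ∈ (0,1], m ≥ 1, B ≥ 1, μ a probability measure on Λ, and q : Λ → [0,p] measurable. Suppose for each j ∈ S^c there are measurable {0,1}-valued U_{j,b}(λ), b = 1,...,B, such that for all λ ∈ Λ and all nonempty T ⊆ {1,...,B} with |T| ≤ m, P(∀ b ∈ T : U_{j,b}(λ) = 1) ≤ (q(λ)/p)^{2|T|}, and let π̂_j(λ) ≤ (1 + (1/B)∑_b U_{j,b}(λ))/2 be measurable. Then E|{j ∈ S^c : ∫_Λ h_m(π̂_j(λ)) μ(dλ) ≥ τ}| ≤ (p/(τ B^m)) ∑_{k_1+⋯+k_B=m} (m!/(k_1!⋯k_B!)) ∫_Λ (q(λ)/p)^{2∑_b 1(k_b≠0)} μ(dλ). -/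
open MeasureTheory Finset

private lemma ipss_int_bdd {α : Type*} [MeasurableSpace α] {ν : Measure α}
    [IsFiniteMeasure ν] {f : α → ℝ} (hf : AEStronglyMeasurable f ν)
    (hbd : ∀ x, |f x| ≤ 1) : Integrable f ν :=
  (integrable_const 1).mono' hf (ae_of_all _ fun x => by simpa using hbd x)

private lemma ipss_int01 {α : Type*} [MeasurableSpace α] {ν : Measure α}
    [IsFiniteMeasure ν] {f : α → ℝ} (hf : Measurable f) (h0 : ∀ x, 0 ≤ f x)
    (h1 : ∀ x, f x ≤ 1) : Integrable f ν :=
  ipss_int_bdd hf.aestronglyMeasurable fun x => by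
    rw [abs_of_nonneg (h0 x)]; exact h1 x

private lemma ipss_abs_integral_le_one {α : Type*} [MeasurableSpace α] (ν : Measure α)
    [IsProbabilityMeasure ν] {f : α → ℝ} (h0 : ∀ x, 0 ≤ f x) (h1 : ∀ x, f x ≤ 1) :
    |∫ x, f x ∂ν| ≤ 1 := by
  have := norm_integral_le_of_norm_le_const (μ := ν) (f := f) (C := 1)
    (ae_of_all _ fun x => by rw [Real.norm_eq_abs, abs_of_nonneg (h0 x)]; exact h1 x)
  simpa using this

set_option maxHeartbeats 2000000 in
open Classical in
/-- Abstract IPSS bound (Theorem 1): with `h_m(x) = (2x−1)^m 1(x ≥ 1/2)`, if for each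
false feature `j ∉ S` the indicators `U_{j,b}(λ)` satisfy the joint-selection bound
`P(∀ b ∈ T, U_{j,b}(λ) = 1) ≤ (q(λ)/p)^{2|T|}` for nonempty `T` with `|T| ≤ m`, and
`π̂_j(λ) ≤ (1 + (1/B) ∑_b U_{j,b}(λ))/2`, then the expected number of selected false
positives is at most
`(p/(τ B^m)) ∑_{k_1+⋯+k_B=m} (m!/(k_1!⋯k_B!)) ∫_Λ (q(λ)/p)^{2 N_k} μ(dλ)`. -/
theorem stmt14 {Ω Λ : Type*} [MeasurableSpace Ω] [MeasurableSpace Λ]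
    (P : Measure Ω) [IsProbabilityMeasure P]
    (μ : Measure Λ) [IsProbabilityMeasure μ]
    (p : ℕ) (hp : 1 ≤ p) (S : Finset (Fin p))
    (τ : ℝ) (hτ : τ ∈ Set.Ioc (0:ℝ) 1) (m B : ℕ) (hm : 1 ≤ m) (hB : 1 ≤ B)
    (q : Λ → ℝ) (hqmeas : Measurable q) (hq : ∀ l, q l ∈ Set.Icc (0:ℝ) p)
    (U : Fin p → Fin B → Λ → Ω → ℝ)
    (hUmeas : ∀ j b, Measurable fun x : Λ × Ω => U j b x.1 x.2)
    (hU01 : ∀ j b l ω, U j b l ω = 0 ∨ U j b l ω = 1)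
    (hjoint : ∀ j ∉ S, ∀ l : Λ, ∀ T : Finset (Fin B), T.Nonempty → T.card ≤ m →
      P {ω | ∀ b ∈ T, U j b l ω = 1} ≤ ENNReal.ofReal ((q l / p) ^ (2 * T.card)))
    (pihat : Fin p → Λ → Ω → ℝ)
    (hmeas : ∀ j, Measurable fun x : Λ × Ω => pihat j x.1 x.2)
    (hrange : ∀ j l ω, pihat j l ω ∈ Set.Icc (0:ℝ) 1)
    (hle : ∀ j ∉ S, ∀ l ω,
      pihat j l ω ≤ (1 + (∑ b, U j b l ω) / B) / 2) :
    ∫ ω, ((Finset.univ.filter (fun j => j ∉ S ∧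
        τ ≤ ∫ l, (if pihat j l ω ≥ 1/2 then (2 * pihat j l ω - 1) ^ m else 0) ∂μ)).card
          : ℝ) ∂P
      ≤ ((p : ℝ) / (τ * (B:ℝ) ^ m)) *
          ∑ k ∈ Finset.Nat.antidiagonalTuple B m,
            (Nat.multinomial Finset.univ k : ℝ) *
              ∫ l, (q l / p) ^ (2 * (Finset.univ.filter (fun b => k b ≠ 0)).card) ∂μ := by
  obtain ⟨hτ0, hτ1⟩ := hτ
  have hp0 : (0:ℝ) < p := by exact_mod_cast hp
  have hB0 : (0:ℝ) < B := by exact_mod_cast hB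
  have hBm : (0:ℝ) < (B:ℝ) ^ m := pow_pos hB0 m
  have hU0 : ∀ j b l ω, 0 ≤ U j b l ω := fun j b l ω => by
    rcases hU01 j b l ω with h | h <;> simp [h]
  have hU1 : ∀ j b l ω, U j b l ω ≤ 1 := fun j b l ω => by
    rcases hU01 j b l ω with h | h <;> simp [h]
  have hqp0 : ∀ l, 0 ≤ q l / p := fun l => div_nonneg (hq l).1 hp0.le
  have hqp1 : ∀ l, q l / p ≤ 1 := fun l => (div_le_one hp0).2 (hq l).2
  have hsum0 : ∀ j l ω, 0 ≤ (∑ b, U j b l ω) := fun j l ω =>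
    Finset.sum_nonneg fun b _ => hU0 j b l ω
  have hsumB : ∀ j l ω, (∑ b, U j b l ω) ≤ B := fun j l ω => by
    calc (∑ b, U j b l ω) ≤ ∑ _b : Fin B, (1:ℝ) :=
          Finset.sum_le_sum fun b _ => hU1 j b l ω
      _ = B := by simp
  set h : Fin p → Λ → Ω → ℝ :=
    fun j l ω => if pihat j l ω ≥ 1/2 then (2 * pihat j l ω - 1) ^ m else 0 with hh_def
  have h_eq : ∀ j l ω,
      (if pihat j l ω ≥ 1/2 then (2 * pihat j l ω - 1) ^ m else 0) = h j l ω :=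
    fun _ _ _ => rfl
  simp only [h_eq]
  set g : Fin p → Λ → Ω → ℝ := fun j l ω => ((∑ b, U j b l ω) / B) ^ m with hg_def
  have hgmeas : ∀ j, Measurable fun x : Λ × Ω => g j x.1 x.2 := fun j =>
    ((Finset.measurable_sum univ fun b _ => hUmeas j b).div_const _).pow_const m
  have hg0 : ∀ j l ω, 0 ≤ g j l ω := fun j l ω =>
    pow_nonneg (div_nonneg (hsum0 j l ω) hB0.le) m
  have hg1 : ∀ j l ω, g j l ω ≤ 1 := fun j l ω =>
    pow_le_one₀ (div_nonneg (hsum0 j l ω) hB0.le) ((div_le_one hB0).2 (hsumB j l ω))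
  have hhmeas : ∀ j, Measurable fun x : Λ × Ω => h j x.1 x.2 := fun j => by
    refine Measurable.ite ?_ ?_ measurable_const
    · exact measurableSet_le measurable_const (hmeas j)
    · exact (((hmeas j).const_mul 2).sub measurable_const).pow_const m
  have hh0 : ∀ j l ω, 0 ≤ h j l ω := fun j l ω => by
    simp only [hh_def]
    split_ifs with hc
    · exact pow_nonneg (by linarith) m
    · exact le_refl _
  have hh1 : ∀ j l ω, h j l ω ≤ 1 := fun j l ω => by
    simp only [hh_def]
    split_ifs with hc
    · exact pow_le_one₀ (by linarith) (by have := (hrange j l ω).2; linarith)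
    · exact zero_le_one
  have hhg : ∀ j ∉ S, ∀ l ω, h j l ω ≤ g j l ω := by
    intro j hj l ω
    simp only [hh_def, hg_def]
    split_ifs with hc
    · refine pow_le_pow_left₀ (by linarith) ?_ m
      have := hle j hj l ω
      linarith
    · exact hg0 j l ω
  -- section measurability
  have hsecU : ∀ j b l, Measurable fun ω => U j b l ω := fun j b l =>
    (hUmeas j b).comp measurable_prodMk_left
  have hsecg : ∀ j l, Measurable fun ω => g j l ω := fun j l =>
    (hgmeas j).comp measurable_prodMk_left
  have hsech : ∀ j ω, Measurable fun l => h j l ω := fun j ω =>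
    (hhmeas j).comp measurable_prodMk_right
  have hsecgl : ∀ j ω, Measurable fun l => g j l ω := fun j ω =>
    (hgmeas j).comp measurable_prodMk_right
  -- measurability of the λ-averaged quantities
  have hFmeas : ∀ j, Measurable fun ω => ∫ l, h j l ω ∂μ := fun j =>
    (MeasureTheory.StronglyMeasurable.integral_prod_left'
      (f := fun x : Λ × Ω => h j x.1 x.2) (hhmeas j).stronglyMeasurable).measurable
  have hIGmeas : ∀ j, Measurable fun ω => ∫ l, g j l ω ∂μ := fun j =>
    (MeasureTheory.StronglyMeasurable.integral_prod_left'
      (f := fun x : Λ × Ω => g j x.1 x.2) (hgmeas j).stronglyMeasurable).measurable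
  have hGmeas : ∀ j, Measurable fun l => ∫ ω, g j l ω ∂P := fun j =>
    (MeasureTheory.StronglyMeasurable.integral_prod_right'
      (f := fun x : Λ × Ω => g j x.1 x.2) (hgmeas j).stronglyMeasurable).measurable
  have hFint : ∀ j, Integrable (fun ω => ∫ l, h j l ω ∂μ) P := fun j =>
    ipss_int_bdd (hFmeas j).aestronglyMeasurable fun ω =>
      ipss_abs_integral_le_one μ (fun l => hh0 j l ω) (fun l => hh1 j l ω)
  -- rewrite the antidiagonal
  have hAT : Finset.Nat.antidiagonalTuple B m = piAntidiag (univ : Finset (Fin B)) m :=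
    (Finset.piAntidiag_univ_fin_eq_antidiagonalTuple m B).symm
  rw [hAT]
  -- the core per-(j,l) moment bound
  have core : ∀ j ∉ S, ∀ l, ∫ ω, g j l ω ∂P ≤
      (∑ k ∈ piAntidiag (univ : Finset (Fin B)) m, (Nat.multinomial Finset.univ k : ℝ) *
        (q l / p) ^ (2 * (Finset.univ.filter (fun b => k b ≠ 0)).card)) / (B:ℝ) ^ m := by
    intro j hj l
    have expand : ∀ ω, g j l ω =
        (∑ k ∈ piAntidiag (univ : Finset (Fin B)) m, (Nat.multinomial Finset.univ k : ℝ) *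
          ∏ b, U j b l ω ^ k b) / (B:ℝ) ^ m := by
      intro ω
      simp only [hg_def]
      rw [div_pow, Finset.sum_pow_eq_sum_piAntidiag]
    have hprodmeas : ∀ k : Fin B → ℕ, Measurable fun ω => ∏ b, U j b l ω ^ k b :=
      fun k => Finset.measurable_prod univ fun b _ => (hsecU j b l).pow_const _
    have hprod0 : ∀ (k : Fin B → ℕ) ω, 0 ≤ ∏ b, U j b l ω ^ k b := fun k ω =>
      Finset.prod_nonneg fun b _ => pow_nonneg (hU0 j b l ω) _
    have hprod1 : ∀ (k : Fin B → ℕ) ω, (∏ b, U j b l ω ^ k b) ≤ 1 := fun k ω =>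
      Finset.prod_le_one (fun b _ => pow_nonneg (hU0 j b l ω) _)
        (fun b _ => pow_le_one₀ (hU0 j b l ω) (hU1 j b l ω))
    have hprod_ind : ∀ (k : Fin B → ℕ), ∀ ω, (∏ b, U j b l ω ^ k b) =
        Set.indicator {ω' | ∀ b ∈ Finset.univ.filter (fun b => k b ≠ 0), U j b l ω' = 1}
          1 ω := by
      intro k ω
      have step1 : (∏ b, U j b l ω ^ k b) =
          ∏ b ∈ Finset.univ.filter (fun b => k b ≠ 0), U j b l ω := by
        rw [← Finset.prod_filter_mul_prod_filter_not univ (fun b => k b ≠ 0)]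
        have h2 : (∏ b ∈ Finset.univ.filter (fun b => ¬ k b ≠ 0), U j b l ω ^ k b) = 1 := by
          refine Finset.prod_eq_one fun b hb => ?_
          have : k b = 0 := not_not.mp (Finset.mem_filter.mp hb).2
          simp [this]
        rw [h2, mul_one]
        refine Finset.prod_congr rfl fun b hb => ?_
        rcases hU01 j b l ω with h0 | h1
        · rw [h0, zero_pow (Finset.mem_filter.mp hb).2]
        · rw [h1, one_pow]
      rw [step1]
      by_cases hall : ∀ b ∈ Finset.univ.filter (fun b => k b ≠ 0), U j b l ω = 1
      · have hmem : ω ∈ {ω' | ∀ b ∈ Finset.univ.filter (fun b => k b ≠ 0), U j b l ω' = 1} :=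
          hall
        rw [Set.indicator_of_mem hmem]
        rw [Finset.prod_congr rfl hall, Finset.prod_const_one]
        rfl
      · have hmem : ω ∉ {ω' | ∀ b ∈ Finset.univ.filter (fun b => k b ≠ 0), U j b l ω' = 1} :=
          hall
        rw [Set.indicator_of_notMem hmem]
        push_neg at hall
        obtain ⟨b, hbT, hb1⟩ := hall
        have hb0 : U j b l ω = 0 := by
          rcases hU01 j b l ω with h0 | h1
          · exact h0
          · exact absurd h1 hb1
        exact Finset.prod_eq_zero hbT hb0
    have hsmeas : ∀ (k : Fin B → ℕ), MeasurableSet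
        {ω' | ∀ b ∈ Finset.univ.filter (fun b => k b ≠ 0), U j b l ω' = 1} := by
      intro k
      have hset : {ω' | ∀ b ∈ Finset.univ.filter (fun b => k b ≠ 0), U j b l ω' = 1}
          = ⋂ b ∈ Finset.univ.filter (fun b => k b ≠ 0), {ω' | U j b l ω' = 1} := by
        ext ω'; simp
      rw [hset]
      exact MeasurableSet.biInter (Set.to_countable _) fun b _ =>
        (hsecU j b l) (measurableSet_singleton 1)
    have hT : ∀ k ∈ piAntidiag (univ : Finset (Fin B)) m,
        (Finset.univ.filter (fun b => k b ≠ 0)).Nonempty ∧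
        (Finset.univ.filter (fun b => k b ≠ 0)).card ≤ m := by
      intro k hk
      rw [Finset.mem_piAntidiag] at hk
      obtain ⟨hsum, -⟩ := hk
      constructor
      · rw [Finset.filter_nonempty_iff]
        by_contra hc
        push_neg at hc
        have hz : ∑ b ∈ (univ : Finset (Fin B)), k b = 0 :=
          Finset.sum_eq_zero fun b hb => hc b hb
        rw [hsum] at hz
        omega
      · calc (Finset.univ.filter (fun b => k b ≠ 0)).card
            = ∑ b ∈ Finset.univ.filter (fun b => k b ≠ 0), 1 :=
              Finset.card_eq_sum_ones _
          _ ≤ ∑ b ∈ Finset.univ.filter (fun b => k b ≠ 0), k b :=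
              Finset.sum_le_sum fun b hb =>
                Nat.one_le_iff_ne_zero.2 (Finset.mem_filter.mp hb).2
          _ = ∑ b ∈ (univ : Finset (Fin B)), k b := Finset.sum_filter_ne_zero _
          _ = m := hsum
    calc ∫ ω, g j l ω ∂P
        = (∫ ω, ∑ k ∈ piAntidiag (univ : Finset (Fin B)) m,
            (Nat.multinomial Finset.univ k : ℝ) * ∏ b, U j b l ω ^ k b ∂P) / (B:ℝ) ^ m := by
          simp only [expand]
          rw [integral_div]
      _ = (∑ k ∈ piAntidiag (univ : Finset (Fin B)) m,
            (Nat.multinomial Finset.univ k : ℝ) * ∫ ω, (∏ b, U j b l ω ^ k b) ∂P)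
              / (B:ℝ) ^ m := by
          rw [integral_finset_sum _ (fun k _ =>
            (ipss_int01 (hprodmeas k) (hprod0 k) (hprod1 k)).const_mul _)]
          simp only [integral_const_mul]
      _ ≤ (∑ k ∈ piAntidiag (univ : Finset (Fin B)) m,
            (Nat.multinomial Finset.univ k : ℝ) *
              (q l / p) ^ (2 * (Finset.univ.filter (fun b => k b ≠ 0)).card))
              / (B:ℝ) ^ m := by
          refine (div_le_div_iff_of_pos_right hBm).2 (Finset.sum_le_sum fun k hk => ?_)
          refine mul_le_mul_of_nonneg_left ?_ (Nat.cast_nonneg _)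
          have hint : ∫ ω, (∏ b, U j b l ω ^ k b) ∂P =
              (P {ω' | ∀ b ∈ Finset.univ.filter (fun b => k b ≠ 0), U j b l ω' = 1}).toReal := by
            simp only [hprod_ind k]
            exact integral_indicator_one (hsmeas k)
          rw [hint]
          exact ENNReal.toReal_le_of_le_ofReal (pow_nonneg (hqp0 l) _)
            (hjoint j hj l _ (hT k hk).1 (hT k hk).2)
  -- define the constant
  set C : ℝ := ∑ k ∈ piAntidiag (univ : Finset (Fin B)) m,
      (Nat.multinomial Finset.univ k : ℝ) *
        ∫ l, (q l / p) ^ (2 * (Finset.univ.filter (fun b => k b ≠ 0)).card) ∂μ with hC_def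
  have hC0 : 0 ≤ C := Finset.sum_nonneg fun k _ =>
    mul_nonneg (Nat.cast_nonneg _) (integral_nonneg fun l => pow_nonneg (hqp0 l) _)
  -- the per-j tail bound
  have key : ∀ j ∉ S, (P {ω | τ ≤ ∫ l, h j l ω ∂μ}).toReal ≤ (C / (B:ℝ) ^ m) / τ := by
    intro j hj
    rw [le_div_iff₀ hτ0]
    have markov := mul_meas_ge_le_integral_of_nonneg
      (ae_of_all _ fun ω => integral_nonneg fun l => hh0 j l ω) (hFint j) τ
    have step2 : (∫ ω, ∫ l, h j l ω ∂μ ∂P) ≤ ∫ ω, ∫ l, g j l ω ∂μ ∂P := by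
      refine integral_mono (hFint j) ?_ fun ω => ?_
      · exact ipss_int_bdd (hIGmeas j).aestronglyMeasurable fun ω =>
          ipss_abs_integral_le_one μ (fun l => hg0 j l ω) (fun l => hg1 j l ω)
      · exact integral_mono (ipss_int01 (hsech j ω) (fun l => hh0 j l ω) (fun l => hh1 j l ω))
          (ipss_int01 (hsecgl j ω) (fun l => hg0 j l ω) (fun l => hg1 j l ω))
          (fun l => hhg j hj l ω)
    have swap : (∫ ω, ∫ l, g j l ω ∂μ ∂P) = ∫ l, ∫ ω, g j l ω ∂P ∂μ := by
      refine integral_integral_swap ?_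
      refine ipss_int01 (f := fun z : Ω × Λ => g j z.2 z.1) ?_ (fun z => hg0 j z.2 z.1)
        (fun z => hg1 j z.2 z.1)
      exact (hgmeas j).comp measurable_swap
    have step3 : (∫ l, ∫ ω, g j l ω ∂P ∂μ) ≤ C / (B:ℝ) ^ m := by
      have hrhsint : Integrable (fun l =>
          (∑ k ∈ piAntidiag (univ : Finset (Fin B)) m, (Nat.multinomial Finset.univ k : ℝ) *
            (q l / p) ^ (2 * (Finset.univ.filter (fun b => k b ≠ 0)).card)) / (B:ℝ) ^ m) μ := by
        refine Integrable.div_const ?_ _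
        refine integrable_finset_sum _ fun k _ => ?_
        exact (ipss_int01 ((hqmeas.div_const _).pow_const _)
          (fun l => pow_nonneg (hqp0 l) _)
          (fun l => pow_le_one₀ (hqp0 l) (hqp1 l))).const_mul _
      calc (∫ l, ∫ ω, g j l ω ∂P ∂μ)
          ≤ ∫ l, (∑ k ∈ piAntidiag (univ : Finset (Fin B)) m,
              (Nat.multinomial Finset.univ k : ℝ) *
                (q l / p) ^ (2 * (Finset.univ.filter (fun b => k b ≠ 0)).card))
                / (B:ℝ) ^ m ∂μ := by
            refine integral_mono ?_ hrhsint (core j hj)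
            refine ipss_int_bdd (hGmeas j).aestronglyMeasurable fun l => ?_
            exact ipss_abs_integral_le_one P (fun ω => hg0 j l ω) (fun ω => hg1 j l ω)
        _ = C / (B:ℝ) ^ m := by
            rw [integral_div]
            congr 1
            rw [integral_finset_sum _ (fun k _ =>
              (ipss_int01 ((hqmeas.div_const _).pow_const _)
                (fun l => pow_nonneg (hqp0 l) _)
                (fun l => pow_le_one₀ (hqp0 l) (hqp1 l))).const_mul _)]
            simp only [integral_const_mul, hC_def]
    calc (P {ω | τ ≤ ∫ l, h j l ω ∂μ}).toReal * τ
        = τ * (P {ω | τ ≤ ∫ l, h j l ω ∂μ}).toReal := mul_comm _ _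
      _ ≤ ∫ ω, ∫ l, h j l ω ∂μ ∂P := markov
      _ ≤ ∫ ω, ∫ l, g j l ω ∂μ ∂P := step2
      _ = ∫ l, ∫ ω, g j l ω ∂P ∂μ := swap
      _ ≤ C / (B:ℝ) ^ m := step3
  -- rewrite the left-hand side as a sum of probabilities
  have hAmeas : ∀ j, MeasurableSet {ω | τ ≤ ∫ l, h j l ω ∂μ} := fun j =>
    measurableSet_le measurable_const (hFmeas j)
  have hLHS : (∫ ω, ((Finset.univ.filter (fun j => j ∉ S ∧
        τ ≤ ∫ l, h j l ω ∂μ)).card : ℝ) ∂P)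
      = ∑ j ∈ Finset.univ.filter (fun j => j ∉ S),
          (P {ω | τ ≤ ∫ l, h j l ω ∂μ}).toReal := by
    have hrw : ∀ ω, ((Finset.univ.filter (fun j => j ∉ S ∧
          τ ≤ ∫ l, h j l ω ∂μ)).card : ℝ)
        = ∑ j ∈ Finset.univ.filter (fun j => j ∉ S),
            Set.indicator {ω' | τ ≤ ∫ l, h j l ω' ∂μ} 1 ω := by
      intro ω
      rw [Finset.card_filter, Nat.cast_sum, Finset.sum_filter]
      refine Finset.sum_congr rfl fun j _ => ?_
      by_cases h1 : j ∉ S <;> by_cases h2 : τ ≤ ∫ l, h j l ω ∂μ <;>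
        simp [h1, h2, Set.indicator_apply, Set.mem_setOf_eq]
    simp only [hrw]
    rw [integral_finset_sum]
    · exact Finset.sum_congr rfl fun j _ => integral_indicator_one (hAmeas j)
    · exact fun j _ => (integrable_const (1:ℝ)).indicator (hAmeas j)
  rw [hLHS]
  calc (∑ j ∈ Finset.univ.filter (fun j => j ∉ S),
        (P {ω | τ ≤ ∫ l, h j l ω ∂μ}).toReal)
      ≤ ∑ _j ∈ Finset.univ.filter (fun j => j ∉ S), (C / (B:ℝ) ^ m) / τ :=
        Finset.sum_le_sum fun j hj => key j (Finset.mem_filter.mp hj).2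
    _ = ((Finset.univ.filter (fun j : Fin p => j ∉ S)).card : ℝ) * ((C / (B:ℝ) ^ m) / τ) := by
        rw [Finset.sum_const, nsmul_eq_mul]
    _ ≤ (p : ℝ) * ((C / (B:ℝ) ^ m) / τ) := by
        refine mul_le_mul_of_nonneg_right ?_ (by positivity)
        have : (Finset.univ.filter (fun j : Fin p => j ∉ S)).card ≤ p := by
          calc (Finset.univ.filter (fun j : Fin p => j ∉ S)).card
              ≤ (Finset.univ : Finset (Fin p)).card := Finset.card_filter_le _ _
            _ = p := Finset.card_fin p
        exact_mod_cast this
    _ = ((p : ℝ) / (τ * (B:ℝ) ^ m)) * C := by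
        field_simp
end

section
/- (IPSS quadratic bound) Under the hypotheses of the abstract IPSS bound with m = 2 and B ≥ 2, the expected number of selected false positives satisfies E(FP) ≤ (1/τ) ∫_Λ ( q(λ)^2/(Bp) + (B−1)q(λ)^4/(B p^3) ) μ(dλ). -/
open MeasureTheory Finset

private noncomputable def h2fun (x : ℝ) : ℝ := if x ≥ 1/2 then (2*x-1)^2 else 0

private lemma h2fun_def (y : ℝ) : (if y ≥ 1/2 then (2 * y - 1) ^ 2 else 0) = h2fun y := rfl

private lemma h2fun_nonneg (x : ℝ) : 0 ≤ h2fun x := by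
  unfold h2fun; split_ifs <;> positivity

private lemma h2fun_le_one {x : ℝ} (hx : x ∈ Set.Icc (0:ℝ) 1) : h2fun x ≤ 1 := by
  obtain ⟨h0, h1⟩ := hx
  unfold h2fun; split_ifs with hc
  · nlinarith
  · norm_num

private lemma h2fun_measurable : Measurable h2fun := by
  unfold h2fun
  exact Measurable.ite (measurableSet_le measurable_const measurable_id) (by fun_prop)
    measurable_const

private lemma h2fun_key {x t : ℝ} (ht : 0 ≤ t) (hx : x ≤ (1 + t) / 2) : h2fun x ≤ t ^ 2 := by
  unfold h2fun; split_ifs with hc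
  · nlinarith
  · positivity

set_option maxHeartbeats 1000000 in
open Classical in
/-- IPSS quadratic bound (Theorem 2, `m = 2`): under the abstract IPSS hypotheses with
joint-selection bounds for `|T| ≤ 2` and selection via `h_2(x) = (2x−1)² 1(x ≥ 1/2)`,
`E(FP) ≤ (1/τ) ∫_Λ ( q(λ)²/(Bp) + (B−1) q(λ)⁴/(B p³) ) μ(dλ)`. -/
theorem stmt15 {Ω Λ : Type*} [MeasurableSpace Ω] [MeasurableSpace Λ]
    (P : Measure Ω) [IsProbabilityMeasure P]
    (μ : Measure Λ) [IsProbabilityMeasure μ]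
    (p : ℕ) (hp : 1 ≤ p) (S : Finset (Fin p))
    (τ : ℝ) (hτ : τ ∈ Set.Ioc (0:ℝ) 1) (B : ℕ) (hB : 2 ≤ B)
    (q : Λ → ℝ) (hqmeas : Measurable q) (hq : ∀ l, q l ∈ Set.Icc (0:ℝ) p)
    (U : Fin p → Fin B → Λ → Ω → ℝ)
    (hUmeas : ∀ j b, Measurable fun x : Λ × Ω => U j b x.1 x.2)
    (hU01 : ∀ j b l ω, U j b l ω = 0 ∨ U j b l ω = 1)
    (hjoint : ∀ j ∉ S, ∀ l : Λ, ∀ T : Finset (Fin B), T.Nonempty → T.card ≤ 2 →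
      P {ω | ∀ b ∈ T, U j b l ω = 1} ≤ ENNReal.ofReal ((q l / p) ^ (2 * T.card)))
    (pihat : Fin p → Λ → Ω → ℝ)
    (hmeas : ∀ j, Measurable fun x : Λ × Ω => pihat j x.1 x.2)
    (hrange : ∀ j l ω, pihat j l ω ∈ Set.Icc (0:ℝ) 1)
    (hle : ∀ j ∉ S, ∀ l ω,
      pihat j l ω ≤ (1 + (∑ b, U j b l ω) / B) / 2) :
    ∫ ω, ((Finset.univ.filter (fun j => j ∉ S ∧
        τ ≤ ∫ l, (if pihat j l ω ≥ 1/2 then (2 * pihat j l ω - 1) ^ 2 else 0) ∂μ)).card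
          : ℝ) ∂P
      ≤ (1 / τ) * ∫ l,
          (q l ^ 2 / ((B:ℝ) * p) + ((B:ℝ) - 1) * q l ^ 4 / ((B:ℝ) * (p:ℝ) ^ 3)) ∂μ := by
  obtain ⟨hτ0, hτ1⟩ := hτ
  have hp0 : (0:ℝ) < (p:ℝ) := by exact_mod_cast hp
  have hBn : 0 < B := by omega
  have hB0 : (0:ℝ) < (B:ℝ) := by exact_mod_cast hBn
  have hB1 : (1:ℝ) ≤ (B:ℝ) := by exact_mod_cast hBn
  simp only [h2fun_def]
  have hFmeas : ∀ j, Measurable (fun x : Λ × Ω => h2fun (pihat j x.1 x.2)) :=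
    fun j => h2fun_measurable.comp (hmeas j)
  have meas_a : ∀ j, StronglyMeasurable (fun ω : Ω => ∫ l, h2fun (pihat j l ω) ∂μ) := by
    intro j
    have hm : Measurable (fun x : Ω × Λ => h2fun (pihat j x.2 x.1)) :=
      (hFmeas j).comp measurable_swap
    exact hm.stronglyMeasurable.integral_prod_right'
  have a_nonneg : ∀ j ω, 0 ≤ ∫ l, h2fun (pihat j l ω) ∂μ :=
    fun j ω => integral_nonneg fun l => h2fun_nonneg _
  have a_le_one : ∀ j ω, ∫ l, h2fun (pihat j l ω) ∂μ ≤ 1 := by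
    intro j ω
    calc ∫ l, h2fun (pihat j l ω) ∂μ ≤ ∫ _l, (1:ℝ) ∂μ :=
        integral_mono_of_nonneg (Filter.Eventually.of_forall fun l => h2fun_nonneg _)
          (integrable_const 1)
          (Filter.Eventually.of_forall fun l => h2fun_le_one (hrange j l ω))
      _ = 1 := by simp
  have int_a : ∀ j, Integrable (fun ω => ∫ l, h2fun (pihat j l ω) ∂μ) P := by
    intro j
    refine Integrable.mono' (integrable_const 1) (meas_a j).aestronglyMeasurable
      (Filter.Eventually.of_forall fun ω => ?_)
    rw [Real.norm_eq_abs, abs_of_nonneg (a_nonneg j ω)]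
    exact a_le_one j ω
  -- Markov-type pointwise bound
  have stepA : ∀ ω : Ω, ((Finset.univ.filter (fun j => j ∉ S ∧
      τ ≤ ∫ l, h2fun (pihat j l ω) ∂μ)).card : ℝ)
      ≤ (1/τ) * ∑ j ∈ Sᶜ, ∫ l, h2fun (pihat j l ω) ∂μ := by
    intro ω
    set F := Finset.univ.filter (fun j => j ∉ S ∧ τ ≤ ∫ l, h2fun (pihat j l ω) ∂μ) with hF
    have hsub : F ⊆ Sᶜ := by
      intro j hj
      rw [hF, Finset.mem_filter] at hj
      exact Finset.mem_compl.mpr hj.2.1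
    rw [Finset.mul_sum]
    calc (F.card : ℝ) = ∑ _j ∈ F, (1:ℝ) := by simp
      _ ≤ ∑ j ∈ F, (1/τ) * ∫ l, h2fun (pihat j l ω) ∂μ := by
          refine Finset.sum_le_sum fun j hj => ?_
          rw [hF, Finset.mem_filter] at hj
          rw [one_div, inv_mul_eq_div]
          exact (one_le_div hτ0).mpr hj.2.2
      _ ≤ ∑ j ∈ Sᶜ, (1/τ) * ∫ l, h2fun (pihat j l ω) ∂μ := by
          refine Finset.sum_le_sum_of_subset_of_nonneg hsub fun j _ _ => ?_
          have := a_nonneg j ω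
          positivity
  have step1 : ∫ ω, ((Finset.univ.filter (fun j => j ∉ S ∧
        τ ≤ ∫ l, h2fun (pihat j l ω) ∂μ)).card : ℝ) ∂P
      ≤ ∫ ω, (1/τ) * ∑ j ∈ Sᶜ, ∫ l, h2fun (pihat j l ω) ∂μ ∂P := by
    refine integral_mono_of_nonneg (Filter.Eventually.of_forall fun ω => by positivity)
      ((integrable_finset_sum _ fun j _ => int_a j).const_mul _)
      (Filter.Eventually.of_forall stepA)
  have step2 : ∫ ω, (1/τ) * ∑ j ∈ Sᶜ, ∫ l, h2fun (pihat j l ω) ∂μ ∂P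
      = (1/τ) * ∑ j ∈ Sᶜ, ∫ ω, ∫ l, h2fun (pihat j l ω) ∂μ ∂P := by
    rw [integral_const_mul]
    congr 1
    exact integral_finset_sum _ fun j _ => int_a j
  -- Fubini
  have int_prod : ∀ j, Integrable (fun x : Ω × Λ => h2fun (pihat j x.2 x.1)) (P.prod μ) := by
    intro j
    have hm : Measurable fun x : Ω × Λ => h2fun (pihat j x.2 x.1) :=
      (hFmeas j).comp measurable_swap
    refine Integrable.mono' (integrable_const 1) hm.aestronglyMeasurable
      (Filter.Eventually.of_forall fun x => ?_)
    rw [Real.norm_eq_abs, abs_of_nonneg (h2fun_nonneg _)]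
    exact h2fun_le_one (hrange _ _ _)
  have fub : ∀ j, ∫ ω, ∫ l, h2fun (pihat j l ω) ∂μ ∂P
      = ∫ l, ∫ ω, h2fun (pihat j l ω) ∂P ∂μ :=
    fun j => integral_integral_swap (int_prod j)
  -- inner bound for a fixed (j, l)
  have inner : ∀ j ∉ S, ∀ l : Λ, ∫ ω, h2fun (pihat j l ω) ∂P
      ≤ q l ^ 2 / ((B:ℝ) * (p:ℝ)^2) + ((B:ℝ) - 1) * q l ^ 4 / ((B:ℝ) * (p:ℝ)^4) := by
    intro j hjS l
    have hUb : ∀ b, Measurable (fun ω => U j b l ω) :=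
      fun b => (hUmeas j b).comp (measurable_const.prodMk measurable_id)
    have hU0 : ∀ b ω, 0 ≤ U j b l ω := fun b ω => by
      rcases hU01 j b l ω with h|h <;> rw [h] <;> norm_num
    have hU1 : ∀ b ω, U j b l ω ≤ 1 := fun b ω => by
      rcases hU01 j b l ω with h|h <;> rw [h] <;> norm_num
    have hq0 : 0 ≤ q l := (hq l).1
    have pair : ∀ b b' : Fin B, ∫ ω, U j b l ω * U j b' l ω ∂P
        ≤ if b = b' then (q l / p)^2 else (q l / p)^4 := by
      intro b b'
      set A : Set Ω := {ω | U j b l ω = 1 ∧ U j b' l ω = 1} with hA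
      have hAmeas : MeasurableSet A := by
        have h1 : MeasurableSet {ω | U j b l ω = 1} := (hUb b) (measurableSet_singleton 1)
        have h2 : MeasurableSet {ω | U j b' l ω = 1} := (hUb b') (measurableSet_singleton 1)
        exact h1.inter h2
      have heq : (fun ω => U j b l ω * U j b' l ω) = A.indicator (fun _ => (1:ℝ)) := by
        funext ω
        rcases hU01 j b l ω with h1|h1 <;> rcases hU01 j b' l ω with h2|h2 <;>
          simp [Set.indicator_apply, hA, Set.mem_setOf_eq, h1, h2]
      rw [heq, integral_indicator_const (1:ℝ) hAmeas, smul_eq_mul, mul_one]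
      by_cases hbb : b = b'
      · subst hbb
        simp only [if_pos rfl]
        have hj := hjoint j hjS l {b} (Finset.singleton_nonempty b) (by simp)
        have hset : {ω | ∀ c ∈ ({b} : Finset (Fin B)), U j c l ω = 1} = A := by
          ext ω; simp [hA]
        have hpow : (2 * ({b} : Finset (Fin B)).card) = 2 := by simp
        rw [hset, hpow] at hj
        exact ENNReal.toReal_le_of_le_ofReal (by positivity) hj
      · simp only [if_neg hbb]
        have hcard : ({b, b'} : Finset (Fin B)).card = 2 := by
          rw [Finset.card_insert_of_notMem (by simp [hbb]), Finset.card_singleton]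
        have hj := hjoint j hjS l {b, b'} ⟨b, by simp⟩ (by rw [hcard])
        have hset : {ω | ∀ c ∈ ({b, b'} : Finset (Fin B)), U j c l ω = 1} = A := by
          ext ω
          simp only [Finset.mem_insert, Finset.mem_singleton, hA, Set.mem_setOf_eq]
          constructor
          · intro hc; exact ⟨hc b (Or.inl rfl), hc b' (Or.inr rfl)⟩
          · rintro ⟨h1, h2⟩ c (rfl|rfl) <;> assumption
        rw [hset, hcard] at hj
        have : (2 * 2) = 4 := by norm_num
        rw [this] at hj
        exact ENNReal.toReal_le_of_le_ofReal (by positivity) hj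
    have hpt : ∀ ω, h2fun (pihat j l ω) ≤ ((∑ b, U j b l ω) / B)^2 := by
      intro ω
      refine h2fun_key ?_ (hle j hjS l ω)
      have h0 : 0 ≤ ∑ b, U j b l ω := Finset.sum_nonneg fun b _ => hU0 b ω
      positivity
    have hsum_meas : Measurable (fun ω => ((∑ b, U j b l ω) / B)^2) := by
      have : Measurable (fun ω => ∑ b, U j b l ω) :=
        Finset.measurable_sum _ fun b _ => hUb b
      fun_prop
    have hint2 : Integrable (fun ω => ((∑ b, U j b l ω) / B)^2) P := by
      refine Integrable.mono' (integrable_const 1) hsum_meas.aestronglyMeasurable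
        (Filter.Eventually.of_forall fun ω => ?_)
      have hs0 : 0 ≤ ∑ b, U j b l ω := Finset.sum_nonneg fun b _ => hU0 b ω
      have hs1 : ∑ b, U j b l ω ≤ B := by
        calc ∑ b, U j b l ω ≤ ∑ _b : Fin B, (1:ℝ) := Finset.sum_le_sum fun b _ => hU1 b ω
          _ = B := by simp
      rw [Real.norm_eq_abs, abs_of_nonneg (by positivity), div_pow,
        div_le_one (by positivity)]
      nlinarith
    have step_h : ∫ ω, h2fun (pihat j l ω) ∂P ≤ ∫ ω, ((∑ b, U j b l ω) / B)^2 ∂P :=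
      integral_mono_of_nonneg (Filter.Eventually.of_forall fun ω => h2fun_nonneg _) hint2
        (Filter.Eventually.of_forall hpt)
    have hintUU : ∀ b b' : Fin B, Integrable (fun ω => U j b l ω * U j b' l ω) P := by
      intro b b'
      refine Integrable.mono' (integrable_const 1) ((hUb b).mul (hUb b')).aestronglyMeasurable
        (Filter.Eventually.of_forall fun ω => ?_)
      rw [Real.norm_eq_abs, abs_of_nonneg (mul_nonneg (hU0 b ω) (hU0 b' ω))]
      calc U j b l ω * U j b' l ω ≤ 1 * 1 :=
          mul_le_mul (hU1 b ω) (hU1 b' ω) (hU0 b' ω) zero_le_one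
        _ = 1 := by norm_num
    have hexp : ∀ ω, ((∑ b, U j b l ω) / B)^2
        = (1/(B:ℝ)^2) * ∑ b, ∑ b', U j b l ω * U j b' l ω := by
      intro ω
      rw [div_pow, sq (∑ b, U j b l ω), Finset.sum_mul_sum]
      field_simp
    have step_sq : ∫ ω, ((∑ b, U j b l ω) / B)^2 ∂P
        = (1/(B:ℝ)^2) * ∑ b : Fin B, ∑ b' : Fin B, ∫ ω, U j b l ω * U j b' l ω ∂P := by
      simp_rw [hexp]
      rw [integral_const_mul]
      congr 1
      rw [integral_finset_sum _ (fun b _ => integrable_finset_sum _ fun b' _ => hintUU b b')]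
      exact Finset.sum_congr rfl fun b _ => integral_finset_sum _ fun b' _ => hintUU b b'
    have sum_bound : ∑ b : Fin B, ∑ b' : Fin B, ∫ ω, U j b l ω * U j b' l ω ∂P
        ≤ (B:ℝ) * ((q l / p)^2 + ((B:ℝ)-1) * (q l / p)^4) := by
      calc ∑ b : Fin B, ∑ b' : Fin B, ∫ ω, U j b l ω * U j b' l ω ∂P
          ≤ ∑ b : Fin B, ∑ b' : Fin B, (if b = b' then (q l / p)^2 else (q l / p)^4) :=
            Finset.sum_le_sum fun b _ => Finset.sum_le_sum fun b' _ => pair b b'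
        _ = ∑ _b : Fin B, ((q l / p)^2 + ((B:ℝ)-1) * (q l / p)^4) := by
            refine Finset.sum_congr rfl fun b _ => ?_
            have hrw : ∀ b' : Fin B, (if b = b' then (q l/p)^2 else (q l/p)^4)
                = (q l/p)^4 + (if b = b' then (q l/p)^2 - (q l/p)^4 else 0) := by
              intro b'; split_ifs <;> ring
            simp_rw [hrw]
            rw [Finset.sum_add_distrib, Finset.sum_const, Finset.sum_ite_eq,
              Finset.card_univ, Fintype.card_fin, nsmul_eq_mul]
            simp only [Finset.mem_univ, if_true]
            ring
        _ = (B:ℝ) * ((q l / p)^2 + ((B:ℝ)-1) * (q l / p)^4) := by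
            rw [Finset.sum_const, Finset.card_univ, Fintype.card_fin, nsmul_eq_mul]
    calc ∫ ω, h2fun (pihat j l ω) ∂P ≤ ∫ ω, ((∑ b, U j b l ω) / B)^2 ∂P := step_h
      _ = (1/(B:ℝ)^2) * ∑ b : Fin B, ∑ b' : Fin B, ∫ ω, U j b l ω * U j b' l ω ∂P := step_sq
      _ ≤ (1/(B:ℝ)^2) * ((B:ℝ) * ((q l / p)^2 + ((B:ℝ)-1) * (q l / p)^4)) :=
          mul_le_mul_of_nonneg_left sum_bound (by positivity)
      _ = q l ^ 2 / ((B:ℝ) * (p:ℝ)^2) + ((B:ℝ) - 1) * q l ^ 4 / ((B:ℝ) * (p:ℝ)^4) := by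
          field_simp
  -- integrability of the bound function
  have g_int : Integrable (fun l => q l ^ 2 / ((B:ℝ) * (p:ℝ)^2)
      + ((B:ℝ) - 1) * q l ^ 4 / ((B:ℝ) * (p:ℝ)^4)) μ := by
    have hm : Measurable (fun l => q l ^ 2 / ((B:ℝ) * (p:ℝ)^2)
        + ((B:ℝ) - 1) * q l ^ 4 / ((B:ℝ) * (p:ℝ)^4)) := by fun_prop
    refine Integrable.mono' (integrable_const 1) hm.aestronglyMeasurable
      (Filter.Eventually.of_forall fun l => ?_)
    obtain ⟨hq0, hq1⟩ := hq l
    have hBm1 : (0:ℝ) ≤ (B:ℝ) - 1 := by linarith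
    rw [Real.norm_eq_abs, abs_of_nonneg (by positivity)]
    have h2 : q l ^ 2 ≤ (p:ℝ)^2 := by nlinarith
    have h4 : q l ^ 4 ≤ (p:ℝ)^4 := by nlinarith
    have e1 : q l ^2 / ((B:ℝ)*(p:ℝ)^2) ≤ 1/(B:ℝ) := by
      rw [div_le_div_iff₀ (by positivity) hB0]; nlinarith
    have e2 : ((B:ℝ)-1) * q l ^4 / ((B:ℝ)*(p:ℝ)^4) ≤ ((B:ℝ)-1)/(B:ℝ) := by
      rw [div_le_div_iff₀ (by positivity) hB0]
      nlinarith [mul_le_mul_of_nonneg_left h4 (mul_nonneg hBm1 hB0.le)]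
    have e3 : 1/(B:ℝ) + ((B:ℝ)-1)/(B:ℝ) = 1 := by field_simp; ring
    linarith
  have gnn : 0 ≤ ∫ l, (q l ^ 2 / ((B:ℝ) * (p:ℝ)^2)
      + ((B:ℝ) - 1) * q l ^ 4 / ((B:ℝ) * (p:ℝ)^4)) ∂μ := by
    refine integral_nonneg fun l => ?_
    have hq0 : 0 ≤ q l := (hq l).1
    have hBm1 : (0:ℝ) ≤ (B:ℝ) - 1 := by linarith
    positivity
  have step5 : ∀ j ∉ S, ∫ l, ∫ ω, h2fun (pihat j l ω) ∂P ∂μ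
      ≤ ∫ l, (q l ^ 2 / ((B:ℝ) * (p:ℝ)^2)
        + ((B:ℝ) - 1) * q l ^ 4 / ((B:ℝ) * (p:ℝ)^4)) ∂μ := by
    intro j hjS
    exact integral_mono_of_nonneg
      (Filter.Eventually.of_forall fun l => integral_nonneg fun ω => h2fun_nonneg _)
      g_int (Filter.Eventually.of_forall fun l => inner j hjS l)
  have cardle : ((Sᶜ : Finset (Fin p)).card : ℝ) ≤ (p:ℝ) := by
    have h1 := Finset.card_le_univ (Sᶜ : Finset (Fin p))
    have h2 : (Finset.univ : Finset (Fin p)).card = p := by simp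
    exact_mod_cast le_trans h1 (le_of_eq h2)
  have sum_step : ∑ j ∈ Sᶜ, ∫ ω, ∫ l, h2fun (pihat j l ω) ∂μ ∂P
      ≤ (p:ℝ) * ∫ l, (q l ^ 2 / ((B:ℝ) * (p:ℝ)^2)
        + ((B:ℝ) - 1) * q l ^ 4 / ((B:ℝ) * (p:ℝ)^4)) ∂μ := by
    calc ∑ j ∈ Sᶜ, ∫ ω, ∫ l, h2fun (pihat j l ω) ∂μ ∂P
        = ∑ j ∈ Sᶜ, ∫ l, ∫ ω, h2fun (pihat j l ω) ∂P ∂μ :=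
          Finset.sum_congr rfl fun j _ => fub j
      _ ≤ ∑ _j ∈ Sᶜ, ∫ l, (q l ^ 2 / ((B:ℝ) * (p:ℝ)^2)
            + ((B:ℝ) - 1) * q l ^ 4 / ((B:ℝ) * (p:ℝ)^4)) ∂μ :=
          Finset.sum_le_sum fun j hj => step5 j (Finset.mem_compl.mp hj)
      _ = ((Sᶜ : Finset (Fin p)).card : ℝ) * ∫ l, (q l ^ 2 / ((B:ℝ) * (p:ℝ)^2)
            + ((B:ℝ) - 1) * q l ^ 4 / ((B:ℝ) * (p:ℝ)^4)) ∂μ := by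
          rw [Finset.sum_const, nsmul_eq_mul]
      _ ≤ (p:ℝ) * ∫ l, (q l ^ 2 / ((B:ℝ) * (p:ℝ)^2)
            + ((B:ℝ) - 1) * q l ^ 4 / ((B:ℝ) * (p:ℝ)^4)) ∂μ :=
          mul_le_mul_of_nonneg_right cardle gnn
  have final_eq : (p:ℝ) * ∫ l, (q l ^ 2 / ((B:ℝ) * (p:ℝ)^2)
      + ((B:ℝ) - 1) * q l ^ 4 / ((B:ℝ) * (p:ℝ)^4)) ∂μ
      = ∫ l, (q l ^ 2 / ((B:ℝ) * p) + ((B:ℝ) - 1) * q l ^ 4 / ((B:ℝ) * (p:ℝ) ^ 3)) ∂μ := by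
    rw [← integral_const_mul]
    congr 1
    funext l
    field_simp
  calc ∫ ω, ((Finset.univ.filter (fun j => j ∉ S ∧
        τ ≤ ∫ l, h2fun (pihat j l ω) ∂μ)).card : ℝ) ∂P
      ≤ ∫ ω, (1/τ) * ∑ j ∈ Sᶜ, ∫ l, h2fun (pihat j l ω) ∂μ ∂P := step1
    _ = (1/τ) * ∑ j ∈ Sᶜ, ∫ ω, ∫ l, h2fun (pihat j l ω) ∂μ ∂P := step2
    _ ≤ (1/τ) * ((p:ℝ) * ∫ l, (q l ^ 2 / ((B:ℝ) * (p:ℝ)^2)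
          + ((B:ℝ) - 1) * q l ^ 4 / ((B:ℝ) * (p:ℝ)^4)) ∂μ) :=
        mul_le_mul_of_nonneg_left sum_step (by positivity)
    _ = (1/τ) * ∫ l, (q l ^ 2 / ((B:ℝ) * p)
          + ((B:ℝ) - 1) * q l ^ 4 / ((B:ℝ) * (p:ℝ) ^ 3)) ∂μ := by rw [final_eq]
end

section
/- (IPSS cubic bound) Under the hypotheses of the abstract IPSS bound with m = 3 and B ≥ 3, E(FP) ≤ (1/τ) ∫_Λ ( q(λ)^2/(B^2 p) + 3(B−1)q(λ)^4/(B^2 p^3) + (B−1)(B−2)q(λ)^6/(B^2 p^5) ) μ(dλ). -/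
open MeasureTheory Finset

open Classical in
lemma sum_ite_one {B : ℕ} (a : Fin B) (A C : ℝ) :
    ∑ x : Fin B, (if x = a then A else C) = A + ((B:ℝ) - 1) * C := by
  have h : ∀ x : Fin B, (if x = a then A else C) = (if x = a then A - C else 0) + C := by
    intro x; by_cases hx : x = a <;> simp [hx]
  rw [Finset.sum_congr rfl (fun x _ => h x), Finset.sum_add_distrib,
    Finset.sum_ite_eq' Finset.univ a (fun _ => A - C)]
  simp [Finset.card_univ]
  ring

open Classical in
lemma sum_ite_two {B : ℕ} (a b : Fin B) (hab : a ≠ b) (A C : ℝ) :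
    ∑ x : Fin B, (if x = a ∨ x = b then A else C) = 2 * A + ((B:ℝ) - 2) * C := by
  have h : ∀ x : Fin B, (if x = a ∨ x = b then A else C)
      = (if x = a then A - C else 0) + ((if x = b then A - C else 0) + C) := by
    intro x
    by_cases hx : x = a
    · have hxb : ¬ x = b := by rw [hx]; exact hab
      simp [hx, hxb, hab]
    · by_cases hy : x = b
      · subst hy; simp [hx]
      · simp [hx, hy]
  rw [Finset.sum_congr rfl (fun x _ => h x), Finset.sum_add_distrib, Finset.sum_add_distrib,
    Finset.sum_ite_eq' Finset.univ a (fun _ => A - C),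
    Finset.sum_ite_eq' Finset.univ b (fun _ => A - C)]
  simp [Finset.card_univ]
  ring

open Classical in
lemma count_sum (B : ℕ) (r : ℝ) :
    ∑ b1 : Fin B, ∑ b2 : Fin B, ∑ b3 : Fin B,
      (if b1 = b2 ∧ b2 = b3 then r^2 else if b1 = b2 ∨ b1 = b3 ∨ b2 = b3 then r^4 else r^6)
    = (B:ℝ) * r^2 + 3*(B:ℝ)*((B:ℝ)-1)*r^4 + (B:ℝ)*((B:ℝ)-1)*((B:ℝ)-2)*r^6 := by
  have h2 : ∀ b1 b2 : Fin B, ∑ b3 : Fin B,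
      (if b1 = b2 ∧ b2 = b3 then r^2 else if b1 = b2 ∨ b1 = b3 ∨ b2 = b3 then r^4 else r^6)
      = if b2 = b1 then (r^2 + ((B:ℝ)-1)*r^4) else (2*r^4 + ((B:ℝ)-2)*r^6) := by
    intro b1 b2
    by_cases h12 : b2 = b1
    · subst h12
      rw [show (∑ b3 : Fin B, (if b2 = b2 ∧ b2 = b3 then r^2 else if b2 = b2 ∨ b2 = b3 ∨ b2 = b3 then r^4 else r^6)) = ∑ b3 : Fin B, (if b3 = b2 then r^2 else r^4) from Finset.sum_congr rfl (fun b3 _ => by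
        by_cases h : b3 = b2
        · simp [h]
        · have h' : ¬ b2 = b3 := fun hh => h hh.symm
          simp [h, h'])]
      rw [sum_ite_one]; simp
    · rw [show (∑ b3 : Fin B, (if b1 = b2 ∧ b2 = b3 then r^2 else if b1 = b2 ∨ b1 = b3 ∨ b2 = b3 then r^4 else r^6)) = ∑ b3 : Fin B, (if b3 = b1 ∨ b3 = b2 then r^4 else r^6) from Finset.sum_congr rfl (fun b3 _ => by
        have h21 : ¬ b1 = b2 := fun h => h12 h.symm
        by_cases h3 : b3 = b1
        · subst h3; simp [h21, h12]
        · by_cases h4 : b3 = b2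
          · subst h4; simp [h21, h12]
          · have h13 : ¬ b1 = b3 := fun hh => h3 hh.symm
            have h24 : ¬ b2 = b3 := fun hh => h4 hh.symm
            simp [h3, h4, h13, h24, h21] )]
      rw [sum_ite_two b1 b2 (fun h => h12 h.symm)]
      simp [h12]
  have h1 : ∀ b1 : Fin B, ∑ b2 : Fin B, ∑ b3 : Fin B,
      (if b1 = b2 ∧ b2 = b3 then r^2 else if b1 = b2 ∨ b1 = b3 ∨ b2 = b3 then r^4 else r^6)
      = (r^2 + ((B:ℝ)-1)*r^4) + ((B:ℝ)-1) * (2*r^4 + ((B:ℝ)-2)*r^6) := by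
    intro b1
    rw [Finset.sum_congr rfl (fun b2 _ => h2 b1 b2), sum_ite_one]
  rw [Finset.sum_congr rfl (fun b1 _ => h1 b1), Finset.sum_const, Finset.card_univ,
    Fintype.card_fin, nsmul_eq_mul]
  ring

lemma int_bdd {Ω : Type*} [MeasurableSpace Ω] (P : Measure Ω) [IsFiniteMeasure P]
    {f : Ω → ℝ} (hf : Measurable f) (C : ℝ) (h : ∀ ω, |f ω| ≤ C) : Integrable f P :=
  ⟨hf.aestronglyMeasurable, HasFiniteIntegral.of_bounded (C := C)
    (ae_of_all _ (by simpa [Real.norm_eq_abs] using h))⟩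

lemma indicator_int {Ω : Type*} [MeasurableSpace Ω] (P : Measure Ω) (f : Ω → ℝ)
    (A : Set Ω) (hA : MeasurableSet A)
    (hf1 : ∀ ω ∈ A, f ω = 1) (hf0 : ∀ ω ∉ A, f ω = 0)
    (c : ℝ) (hc : 0 ≤ c) (hPA : P A ≤ ENNReal.ofReal c) : ∫ ω, f ω ∂P ≤ c := by
  have hfe : f = A.indicator 1 := funext fun ω => by
    by_cases h : ω ∈ A
    · simp [Set.indicator_of_mem h, hf1 ω h]
    · simp [Set.indicator_of_notMem h, hf0 ω h]
  rw [hfe, integral_indicator_one hA]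
  exact ENNReal.toReal_le_of_le_ofReal hc hPA

lemma prod_le_aux {Ω : Type*} [MeasurableSpace Ω] (P : Measure Ω) {B : ℕ}
    (V : Fin B → Ω → ℝ) (hVmeas : ∀ b, Measurable (V b)) {r : ℝ} (hr : 0 ≤ r)
    (f : Ω → ℝ) (T : Finset (Fin B))
    (hjoint : P {ω | ∀ b ∈ T, V b ω = 1} ≤ ENNReal.ofReal (r ^ (2 * T.card)))
    (hf1 : ∀ ω, (∀ b ∈ T, V b ω = 1) → f ω = 1)
    (hf0 : ∀ ω, ¬ (∀ b ∈ T, V b ω = 1) → f ω = 0) :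
    ∫ ω, f ω ∂P ≤ r ^ (2 * T.card) := by
  have hA : MeasurableSet {ω | ∀ b ∈ T, V b ω = 1} := by
    have he : {ω | ∀ b ∈ T, V b ω = 1} = ⋂ b ∈ T, V b ⁻¹' {1} := by
      ext ω; simp
    rw [he]
    exact MeasurableSet.biInter (T : Set (Fin B)).to_countable
      (fun b _ => (hVmeas b) (measurableSet_singleton 1))
  exact indicator_int P f _ hA hf1 hf0 _ (pow_nonneg hr _) hjoint

open Classical in
lemma triple_bound {Ω : Type*} [MeasurableSpace Ω] (P : Measure Ω) {B : ℕ}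
    (V : Fin B → Ω → ℝ) (hVmeas : ∀ b, Measurable (V b))
    (hV01 : ∀ b ω, V b ω = 0 ∨ V b ω = 1) {r : ℝ} (hr : 0 ≤ r)
    (hjoint : ∀ T : Finset (Fin B), T.Nonempty → T.card ≤ 3 →
      P {ω | ∀ b ∈ T, V b ω = 1} ≤ ENNReal.ofReal (r ^ (2 * T.card)))
    (b1 b2 b3 : Fin B) :
    ∫ ω, V b1 ω * (V b2 ω * V b3 ω) ∂P ≤
      (if b1 = b2 ∧ b2 = b3 then r^2 else if b1 = b2 ∨ b1 = b3 ∨ b2 = b3 then r^4 else r^6) := by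
  by_cases h1 : b1 = b2 ∧ b2 = b3
  · obtain ⟨h12, h23⟩ := h1
    rw [if_pos ⟨h12, h23⟩]
    have hc : ({b1} : Finset (Fin B)).card = 1 := Finset.card_singleton b1
    have := prod_le_aux P V hVmeas hr (fun ω => V b1 ω * (V b2 ω * V b3 ω)) {b1}
      (hjoint {b1} (Finset.singleton_nonempty b1) (by simp))
      (fun ω h => by
        have h1' : V b1 ω = 1 := h b1 (Finset.mem_singleton_self b1)
        simp [← h12, ← h23, h1'])
      (fun ω h => by
        have h1' : V b1 ω = 0 := by
          refine (hV01 b1 ω).resolve_right fun hne => h ?_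
          intro b hb; rw [Finset.mem_singleton] at hb; rw [hb]; exact hne
        simp [← h12, ← h23, h1'])
    simpa [hc] using this
  · by_cases h2 : b1 = b2 ∨ b1 = b3 ∨ b2 = b3
    · rw [if_neg h1, if_pos h2]
      -- pick a pair T = {x, y} with x ≠ y covering {b1, b2, b3}
      obtain ⟨x, y, hxy, he1, he2, he3⟩ :
          ∃ x y : Fin B, x ≠ y ∧ (b1 = x ∨ b1 = y) ∧ (b2 = x ∨ b2 = y) ∧ (b3 = x ∨ b3 = y) := by
        rcases h2 with h12 | h13 | h23
        · have hne : b2 ≠ b3 := fun h => h1 ⟨h12, h⟩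
          exact ⟨b2, b3, hne, Or.inl h12, Or.inl rfl, Or.inr rfl⟩
        · have hne : b1 ≠ b2 := fun h => h1 ⟨h, h.symm.trans h13⟩
          exact ⟨b1, b2, hne, Or.inl rfl, Or.inr rfl, Or.inl h13.symm⟩
        · have hne : b1 ≠ b2 := fun h => h1 ⟨h, h23⟩
          exact ⟨b1, b2, hne, Or.inl rfl, Or.inr rfl, Or.inr h23.symm⟩
      have hc : ({x, y} : Finset (Fin B)).card = 2 := by
        rw [Finset.card_insert_of_notMem (by simp [hxy]), Finset.card_singleton]
      have hmem : ∀ ω, (∀ b ∈ ({x, y} : Finset (Fin B)), V b ω = 1) ↔ V x ω = 1 ∧ V y ω = 1 := by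
        intro ω; simp
      have := prod_le_aux P V hVmeas hr (fun ω => V b1 ω * (V b2 ω * V b3 ω)) {x, y}
        (hjoint {x, y} ⟨x, by simp⟩ (by rw [hc]; norm_num))
        (fun ω h => by
          obtain ⟨hx, hy⟩ := (hmem ω).mp h
          have e1 : V b1 ω = 1 := by rcases he1 with h | h <;> rw [h] <;> assumption
          have e2 : V b2 ω = 1 := by rcases he2 with h | h <;> rw [h] <;> assumption
          have e3 : V b3 ω = 1 := by rcases he3 with h | h <;> rw [h] <;> assumption
          simp [e1, e2, e3])
        (fun ω h => by
          rw [hmem ω] at h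
          push_neg at h
          by_cases hx : V x ω = 1
          · have hy : V y ω = 0 := (hV01 y ω).resolve_right (h hx)
            rcases he1 with h' | h'
            · rcases he2 with h'' | h''
              · rcases he3 with h''' | h'''
                · exfalso
                  -- all three equal x: then b1 = b2 = b3
                  exact h1 ⟨h'.trans h''.symm, h''.trans h'''.symm⟩
                · simp [h''', hy]
              · simp [h'', hy]
            · simp [h', hy]
          · have hx0 : V x ω = 0 := (hV01 x ω).resolve_right hx
            -- some b_i = x? not necessarily! b1,b2,b3 could all be y... but then all equal
            by_cases hb : b1 = x ∨ b2 = x ∨ b3 = x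
            · rcases hb with h' | h' | h'
              · simp [h', hx0]
              · simp [h', hx0]
              · simp [h', hx0]
            · push_neg at hb
              obtain ⟨n1, n2, n3⟩ := hb
              have e1 : b1 = y := he1.resolve_left n1
              have e2 : b2 = y := he2.resolve_left n2
              have e3 : b3 = y := he3.resolve_left n3
              exact absurd ⟨e1.trans e2.symm, e2.trans e3.symm⟩ h1)
      simpa [hc] using this
    · rw [if_neg h1, if_neg h2]
      push_neg at h2
      obtain ⟨h12, h13, h23⟩ := h2
      have hc : ({b1, b2, b3} : Finset (Fin B)).card = 3 := by
        rw [Finset.card_insert_of_notMem (by simp [h12, h13]),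
          Finset.card_insert_of_notMem (by simp [h23]), Finset.card_singleton]
      have := prod_le_aux P V hVmeas hr (fun ω => V b1 ω * (V b2 ω * V b3 ω)) {b1, b2, b3}
        (hjoint {b1, b2, b3} ⟨b1, by simp⟩ (by rw [hc]))
        (fun ω h => by
          have e1 : V b1 ω = 1 := h b1 (by simp)
          have e2 : V b2 ω = 1 := h b2 (by simp)
          have e3 : V b3 ω = 1 := h b3 (by simp)
          simp [e1, e2, e3])
        (fun ω h => by
          push_neg at h
          obtain ⟨b, hb, hbne⟩ := h
          have hb0 : V b ω = 0 := (hV01 b ω).resolve_right hbne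
          simp only [Finset.mem_insert, Finset.mem_singleton] at hb
          rcases hb with h' | h' | h' <;> subst h' <;> simp [hb0])
      simpa [hc] using this

open Classical in
/-- IPSS cubic bound (Theorem 2, `m = 3`): under the abstract IPSS hypotheses with
joint-selection bounds for `|T| ≤ 3` and selection via `h_3(x) = (2x−1)³ 1(x ≥ 1/2)`,
`E(FP) ≤ (1/τ) ∫_Λ ( q²/(B²p) + 3(B−1)q⁴/(B²p³) + (B−1)(B−2)q⁶/(B²p⁵) ) μ(dλ)`. -/
theorem stmt16 {Ω Λ : Type*} [MeasurableSpace Ω] [MeasurableSpace Λ]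
    (P : Measure Ω) [IsProbabilityMeasure P]
    (μ : Measure Λ) [IsProbabilityMeasure μ]
    (p : ℕ) (hp : 1 ≤ p) (S : Finset (Fin p))
    (τ : ℝ) (hτ : τ ∈ Set.Ioc (0:ℝ) 1) (B : ℕ) (hB : 3 ≤ B)
    (q : Λ → ℝ) (hqmeas : Measurable q) (hq : ∀ l, q l ∈ Set.Icc (0:ℝ) p)
    (U : Fin p → Fin B → Λ → Ω → ℝ)
    (hUmeas : ∀ j b, Measurable fun x : Λ × Ω => U j b x.1 x.2)
    (hU01 : ∀ j b l ω, U j b l ω = 0 ∨ U j b l ω = 1)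
    (hjoint : ∀ j ∉ S, ∀ l : Λ, ∀ T : Finset (Fin B), T.Nonempty → T.card ≤ 3 →
      P {ω | ∀ b ∈ T, U j b l ω = 1} ≤ ENNReal.ofReal ((q l / p) ^ (2 * T.card)))
    (pihat : Fin p → Λ → Ω → ℝ)
    (hmeas : ∀ j, Measurable fun x : Λ × Ω => pihat j x.1 x.2)
    (hrange : ∀ j l ω, pihat j l ω ∈ Set.Icc (0:ℝ) 1)
    (hle : ∀ j ∉ S, ∀ l ω,
      pihat j l ω ≤ (1 + (∑ b, U j b l ω) / B) / 2) :
    ∫ ω, ((Finset.univ.filter (fun j => j ∉ S ∧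
        τ ≤ ∫ l, (if pihat j l ω ≥ 1/2 then (2 * pihat j l ω - 1) ^ 3 else 0) ∂μ)).card
          : ℝ) ∂P
      ≤ (1 / τ) * ∫ l,
          (q l ^ 2 / ((B:ℝ) ^ 2 * p) + 3 * ((B:ℝ) - 1) * q l ^ 4 / ((B:ℝ) ^ 2 * (p:ℝ) ^ 3)
            + ((B:ℝ) - 1) * ((B:ℝ) - 2) * q l ^ 6 / ((B:ℝ) ^ 2 * (p:ℝ) ^ 5)) ∂μ := by
  obtain ⟨hτ0, hτ1⟩ := hτ
  have hp0 : (0:ℝ) < p := by exact_mod_cast hp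
  have hB3 : (3:ℝ) ≤ (B:ℝ) := by exact_mod_cast hB
  have hB0 : (0:ℝ) < B := by linarith
  have hBm1 : (0:ℝ) ≤ (B:ℝ) - 1 := by linarith
  have hBm2 : (0:ℝ) ≤ (B:ℝ) - 2 := by linarith
  have hU0 : ∀ j b l ω, 0 ≤ U j b l ω := fun j b l ω => by
    rcases hU01 j b l ω with h | h <;> rw [h] <;> norm_num
  have hU1 : ∀ j b l ω, U j b l ω ≤ 1 := fun j b l ω => by
    rcases hU01 j b l ω with h | h <;> rw [h] <;> norm_num
  set F : Fin p → Λ → Ω → ℝ :=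
    fun j l ω => if pihat j l ω ≥ 1/2 then (2 * pihat j l ω - 1) ^ 3 else 0 with hFdef
  have hFmeas : ∀ j, Measurable fun x : Λ × Ω => F j x.1 x.2 := fun j =>
    Measurable.ite (measurableSet_le measurable_const (hmeas j))
      ((((hmeas j).const_mul 2).sub measurable_const).pow_const 3) measurable_const
  have hF0 : ∀ j l ω, 0 ≤ F j l ω := by
    intro j l ω
    simp only [hFdef]
    split_ifs with h
    · exact pow_nonneg (by rw [ge_iff_le] at h; linarith) 3
    · exact le_refl 0
  have hF1 : ∀ j l ω, F j l ω ≤ 1 := by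
    intro j l ω
    simp only [hFdef]
    split_ifs with h
    · exact pow_le_one₀ (by rw [ge_iff_le] at h; linarith) (by linarith [(hrange j l ω).2])
    · norm_num
  set g : Λ → ℝ := fun l =>
    ((B:ℝ) * (q l / p) ^ 2 + 3 * (B:ℝ) * ((B:ℝ) - 1) * (q l / p) ^ 4
      + (B:ℝ) * ((B:ℝ) - 1) * ((B:ℝ) - 2) * (q l / p) ^ 6) / (B:ℝ) ^ 3 with hgdef
  have hr0 : ∀ l, 0 ≤ q l / p := fun l => div_nonneg (hq l).1 hp0.le
  have hr1 : ∀ l, q l / p ≤ 1 := fun l => (div_le_one hp0).mpr (hq l).2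
  have hg0 : ∀ l, 0 ≤ g l := by
    intro l
    have h4 := pow_nonneg (hr0 l) 4
    have h6 := pow_nonneg (hr0 l) 6
    apply div_nonneg _ (by positivity)
    have t1 : 0 ≤ (B:ℝ) * (q l / p) ^ 2 := by positivity
    have t2 : 0 ≤ 3 * (B:ℝ) * ((B:ℝ) - 1) * (q l / p) ^ 4 :=
      mul_nonneg (mul_nonneg (by positivity) hBm1) h4
    have t3 : 0 ≤ (B:ℝ) * ((B:ℝ) - 1) * ((B:ℝ) - 2) * (q l / p) ^ 6 :=
      mul_nonneg (mul_nonneg (mul_nonneg hB0.le hBm1) hBm2) h6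
    linarith
  have hgC : ∀ l, g l ≤ ((B:ℝ) + 3 * (B:ℝ) * ((B:ℝ) - 1)
      + (B:ℝ) * ((B:ℝ) - 1) * ((B:ℝ) - 2)) / (B:ℝ) ^ 3 := by
    intro l
    apply (div_le_div_iff_of_pos_right (by positivity)).mpr
    have h2 := pow_le_one₀ (hr0 l) (hr1 l) (n := 2)
    have h4 := pow_le_one₀ (hr0 l) (hr1 l) (n := 4)
    have h6 := pow_le_one₀ (hr0 l) (hr1 l) (n := 6)
    have t1 : (B:ℝ) * (q l / p) ^ 2 ≤ (B:ℝ) * 1 :=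
      mul_le_mul_of_nonneg_left h2 hB0.le
    have t2 : 3 * (B:ℝ) * ((B:ℝ) - 1) * (q l / p) ^ 4 ≤ 3 * (B:ℝ) * ((B:ℝ) - 1) * 1 :=
      mul_le_mul_of_nonneg_left h4 (mul_nonneg (by positivity) hBm1)
    have t3 : (B:ℝ) * ((B:ℝ) - 1) * ((B:ℝ) - 2) * (q l / p) ^ 6
        ≤ (B:ℝ) * ((B:ℝ) - 1) * ((B:ℝ) - 2) * 1 :=
      mul_le_mul_of_nonneg_left h6 (mul_nonneg (mul_nonneg hB0.le hBm1) hBm2)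
    linarith
  have hgmeas : Measurable g := by
    rw [hgdef]
    apply Measurable.div_const
    apply Measurable.add
    · apply Measurable.add
      · exact ((hqmeas.div_const _).pow_const 2).const_mul _
      · exact ((hqmeas.div_const _).pow_const 4).const_mul _
    · exact ((hqmeas.div_const _).pow_const 6).const_mul _
  have hgint : Integrable g μ := by
    refine int_bdd μ hgmeas (((B:ℝ) + 3 * (B:ℝ) * ((B:ℝ) - 1)
      + (B:ℝ) * ((B:ℝ) - 1) * ((B:ℝ) - 2)) / (B:ℝ) ^ 3) (fun l => ?_)
    have hnum : (0:ℝ) ≤ (B:ℝ) + 3 * (B:ℝ) * ((B:ℝ) - 1) + (B:ℝ) * ((B:ℝ) - 1) * ((B:ℝ) - 2) := by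
      nlinarith [hB0, hBm1, hBm2, mul_nonneg hB0.le hBm1, mul_nonneg (mul_nonneg hB0.le hBm1) hBm2]
    have hC : (0:ℝ) ≤ ((B:ℝ) + 3 * (B:ℝ) * ((B:ℝ) - 1)
        + (B:ℝ) * ((B:ℝ) - 1) * ((B:ℝ) - 2)) / (B:ℝ) ^ 3 := div_nonneg hnum (by positivity)
    rw [abs_le]
    exact ⟨by linarith [hg0 l], hgC l⟩
  -- Key bound: for each l and j ∉ S, the Ω-integral of F is at most g l
  have keyl : ∀ j ∉ S, ∀ l, ∫ ω, F j l ω ∂P ≤ g l := by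
    intro j hj l
    set V : Fin B → Ω → ℝ := fun b ω => U j b l ω with hVdef
    have hVmeas : ∀ b, Measurable (V b) := fun b =>
      (hUmeas j b).comp measurable_prodMk_left
    have hV01 : ∀ b ω, V b ω = 0 ∨ V b ω = 1 := fun b ω => hU01 j b l ω
    have hV0 : ∀ b ω, 0 ≤ V b ω := fun b ω => hU0 j b l ω
    have hV1 : ∀ b ω, V b ω ≤ 1 := fun b ω => hU1 j b l ω
    have hterm : ∀ b1 b2 b3 : Fin B,
        Integrable (fun ω => V b1 ω * (V b2 ω * V b3 ω)) P := by
      intro b1 b2 b3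
      refine int_bdd P ((hVmeas b1).mul ((hVmeas b2).mul (hVmeas b3))) 1 (fun ω => ?_)
      rw [abs_le]
      have h0 : 0 ≤ V b1 ω * (V b2 ω * V b3 ω) :=
        mul_nonneg (hV0 b1 ω) (mul_nonneg (hV0 b2 ω) (hV0 b3 ω))
      have h23 : V b2 ω * V b3 ω ≤ 1 :=
        mul_le_one₀ (hV1 b2 ω) (hV0 b3 ω) (hV1 b3 ω)
      have h123 : V b1 ω * (V b2 ω * V b3 ω) ≤ 1 :=
        mul_le_one₀ (hV1 b1 ω) (mul_nonneg (hV0 b2 ω) (hV0 b3 ω)) h23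
      exact ⟨by linarith, h123⟩
    have hsum0 : ∀ ω, 0 ≤ ∑ b, V b ω := fun ω =>
      Finset.sum_nonneg fun b _ => hV0 b ω
    have hsumB : ∀ ω, ∑ b, V b ω ≤ (B:ℝ) := by
      intro ω
      calc ∑ b, V b ω ≤ ∑ _b : Fin B, (1:ℝ) := Finset.sum_le_sum fun b _ => hV1 b ω
        _ = (B:ℝ) := by simp
    have hFint : Integrable (fun ω => F j l ω) P :=
      int_bdd P ((hFmeas j).comp measurable_prodMk_left) 1
        (fun ω => abs_le.mpr ⟨by linarith [hF0 j l ω], hF1 j l ω⟩)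
    have hcube_int : Integrable (fun ω => (∑ b, V b ω) ^ 3 / (B:ℝ) ^ 3) P := by
      refine int_bdd P (((Finset.measurable_sum univ fun b _ =>
        hVmeas b).pow_const 3).div_const _) 1 (fun ω => ?_)
      rw [abs_le]
      constructor
      · have h0 := hsum0 ω
        have : (0:ℝ) ≤ (∑ b, V b ω) ^ 3 / (B:ℝ) ^ 3 := by positivity
        linarith
      · rw [div_le_one (by positivity)]
        calc (∑ b, V b ω) ^ 3 ≤ (B:ℝ) ^ 3 := pow_le_pow_left₀ (hsum0 ω) (hsumB ω) 3
          _ = (B:ℝ) ^ 3 := rfl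
    have step1 : ∫ ω, F j l ω ∂P ≤ ∫ ω, (∑ b, V b ω) ^ 3 / (B:ℝ) ^ 3 ∂P := by
      refine integral_mono hFint hcube_int (fun ω => ?_)
      simp only [hFdef]
      split_ifs with hge
      · rw [ge_iff_le] at hge
        have hub := hle j hj l ω
        have hs : (∑ b, U j b l ω) = ∑ b, V b ω := rfl
        rw [hs] at hub
        have h1 : 0 ≤ 2 * pihat j l ω - 1 := by linarith
        have h2 : 2 * pihat j l ω - 1 ≤ (∑ b, V b ω) / (B:ℝ) := by
          linarith [hub]
        calc (2 * pihat j l ω - 1) ^ 3 ≤ ((∑ b, V b ω) / (B:ℝ)) ^ 3 :=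
              pow_le_pow_left₀ h1 h2 3
          _ = (∑ b, V b ω) ^ 3 / (B:ℝ) ^ 3 := div_pow _ _ 3
      · exact div_nonneg (pow_nonneg (hsum0 ω) 3) (by positivity)
    have expand : ∀ ω, (∑ b, V b ω) ^ 3
        = ∑ b1, ∑ b2, ∑ b3, V b1 ω * (V b2 ω * V b3 ω) := by
      intro ω
      rw [show (∑ b, V b ω) ^ 3
          = (∑ b, V b ω) * ((∑ b, V b ω) * (∑ b, V b ω)) from by ring]
      rw [Finset.sum_mul_sum, Finset.sum_mul_sum]
      simp only [Finset.mul_sum]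
    have step2 : ∫ ω, (∑ b, V b ω) ^ 3 / (B:ℝ) ^ 3 ∂P
        = (∑ b1, ∑ b2, ∑ b3, ∫ ω, V b1 ω * (V b2 ω * V b3 ω) ∂P) / (B:ℝ) ^ 3 := by
      rw [integral_div]
      congr 1
      rw [show (fun ω => (∑ b, V b ω) ^ 3)
          = fun ω => ∑ b1, ∑ b2, ∑ b3, V b1 ω * (V b2 ω * V b3 ω) from funext expand]
      rw [integral_finset_sum _ (fun b1 _ => integrable_finset_sum _
        (fun b2 _ => integrable_finset_sum _ (fun b3 _ => hterm b1 b2 b3)))]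
      refine Finset.sum_congr rfl fun b1 _ => ?_
      rw [integral_finset_sum _ (fun b2 _ => integrable_finset_sum _
        (fun b3 _ => hterm b1 b2 b3))]
      refine Finset.sum_congr rfl fun b2 _ => ?_
      rw [integral_finset_sum _ (fun b3 _ => hterm b1 b2 b3)]
    have step3 : (∑ b1, ∑ b2, ∑ b3, ∫ ω, V b1 ω * (V b2 ω * V b3 ω) ∂P)
        ≤ (B:ℝ) * (q l / p) ^ 2 + 3 * (B:ℝ) * ((B:ℝ) - 1) * (q l / p) ^ 4
          + (B:ℝ) * ((B:ℝ) - 1) * ((B:ℝ) - 2) * (q l / p) ^ 6 := by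
      rw [← count_sum B (q l / p)]
      refine Finset.sum_le_sum fun b1 _ => Finset.sum_le_sum fun b2 _ =>
        Finset.sum_le_sum fun b3 _ => ?_
      exact triple_bound P V hVmeas hV01 (hr0 l)
        (fun T hT hT3 => hjoint j hj l T hT hT3) b1 b2 b3
    calc ∫ ω, F j l ω ∂P ≤ ∫ ω, (∑ b, V b ω) ^ 3 / (B:ℝ) ^ 3 ∂P := step1
      _ = (∑ b1, ∑ b2, ∑ b3, ∫ ω, V b1 ω * (V b2 ω * V b3 ω) ∂P) / (B:ℝ) ^ 3 := step2
      _ ≤ ((B:ℝ) * (q l / p) ^ 2 + 3 * (B:ℝ) * ((B:ℝ) - 1) * (q l / p) ^ 4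
          + (B:ℝ) * ((B:ℝ) - 1) * ((B:ℝ) - 2) * (q l / p) ^ 6) / (B:ℝ) ^ 3 :=
            (div_le_div_iff_of_pos_right (by positivity)).mpr step3
      _ = g l := by rw [hgdef]
  -- Fubini and integrability in ω
  have huncurry : ∀ j, Integrable (Function.uncurry fun ω l => F j l ω) (P.prod μ) :=
    fun j => int_bdd _ ((hFmeas j).comp measurable_swap) 1
      (fun x => by
        simp only [Function.uncurry]
        exact abs_le.mpr ⟨by linarith [hF0 j x.2 x.1], hF1 j x.2 x.1⟩)
  have hswap : ∀ j, ∫ ω, ∫ l, F j l ω ∂μ ∂P = ∫ l, ∫ ω, F j l ω ∂P ∂μ :=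
    fun j => integral_integral_swap (huncurry j)
  have hIbound : ∀ j ∉ S, ∫ ω, ∫ l, F j l ω ∂μ ∂P ≤ ∫ l, g l ∂μ := by
    intro j hj
    rw [hswap j]
    exact integral_mono_of_nonneg
      (ae_of_all _ fun l => integral_nonneg fun ω => hF0 j l ω) hgint
      (ae_of_all _ fun l => keyl j hj l)
  have hFlint : ∀ j ω, Integrable (fun l => F j l ω) μ := fun j ω =>
    int_bdd μ ((hFmeas j).comp measurable_prodMk_right) 1
      (fun l => abs_le.mpr ⟨by linarith [hF0 j l ω], hF1 j l ω⟩)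
  have hf0 : ∀ j ω, 0 ≤ ∫ l, F j l ω ∂μ := fun j ω =>
    integral_nonneg fun l => hF0 j l ω
  have hf1 : ∀ j ω, ∫ l, F j l ω ∂μ ≤ 1 := by
    intro j ω
    calc ∫ l, F j l ω ∂μ ≤ ∫ _l, (1:ℝ) ∂μ :=
          integral_mono (hFlint j ω) (integrable_const 1) (fun l => hF1 j l ω)
      _ = 1 := by simp
  have hfmeas : ∀ j, StronglyMeasurable fun ω => ∫ l, F j l ω ∂μ := fun j =>
    StronglyMeasurable.integral_prod_right
      ((hFmeas j).comp measurable_swap).stronglyMeasurable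
  have hfint : ∀ j, Integrable (fun ω => ∫ l, F j l ω ∂μ) P := fun j =>
    ⟨(hfmeas j).aestronglyMeasurable, HasFiniteIntegral.of_bounded (C := 1)
      (ae_of_all _ fun ω => by
        rw [Real.norm_eq_abs, abs_le]; exact ⟨by linarith [hf0 j ω], hf1 j ω⟩)⟩
  -- pointwise bound on the number of false positives
  have hpoint : ∀ ω, ((Finset.univ.filter (fun j => j ∉ S ∧
      τ ≤ ∫ l, F j l ω ∂μ)).card : ℝ) ≤ ∑ j ∈ Sᶜ, (∫ l, F j l ω ∂μ) / τ := by
    intro ω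
    have h1 : ((Finset.univ.filter (fun j => j ∉ S ∧
        τ ≤ ∫ l, F j l ω ∂μ)).card : ℝ)
        = ∑ _j ∈ Finset.univ.filter (fun j => j ∉ S ∧
            τ ≤ ∫ l, F j l ω ∂μ), (1:ℝ) := by
      rw [Finset.card_eq_sum_ones]
      push_cast
      ring
    have h2 : ∑ _j ∈ Finset.univ.filter (fun j => j ∉ S ∧
        τ ≤ ∫ l, F j l ω ∂μ), (1:ℝ)
        ≤ ∑ j ∈ Finset.univ.filter (fun j => j ∉ S ∧
            τ ≤ ∫ l, F j l ω ∂μ), (∫ l, F j l ω ∂μ) / τ := by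
      refine Finset.sum_le_sum fun j hj => ?_
      rw [Finset.mem_filter] at hj
      exact (one_le_div hτ0).mpr hj.2.2
    have h3 : ∑ j ∈ Finset.univ.filter (fun j => j ∉ S ∧
        τ ≤ ∫ l, F j l ω ∂μ), (∫ l, F j l ω ∂μ) / τ
        ≤ ∑ j ∈ Sᶜ, (∫ l, F j l ω ∂μ) / τ := by
      refine Finset.sum_le_sum_of_subset_of_nonneg (fun j hj => ?_)
        (fun j _ _ => div_nonneg (hf0 j ω) hτ0.le)
      rw [Finset.mem_filter] at hj
      exact Finset.mem_compl.mpr hj.2.1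
    linarith
  have hpoint' : ∀ ω, ((Finset.univ.filter (fun j => j ∉ S ∧
      τ ≤ ∫ l, (if pihat j l ω ≥ 1/2 then (2 * pihat j l ω - 1) ^ 3 else 0) ∂μ)).card : ℝ)
      ≤ ∑ j ∈ Sᶜ, (∫ l, F j l ω ∂μ) / τ := hpoint
  -- final assembly
  calc ∫ ω, ((Finset.univ.filter (fun j => j ∉ S ∧
        τ ≤ ∫ l, (if pihat j l ω ≥ 1/2 then (2 * pihat j l ω - 1) ^ 3 else 0) ∂μ)).card
          : ℝ) ∂P
      ≤ ∫ ω, ∑ j ∈ Sᶜ, (∫ l, F j l ω ∂μ) / τ ∂P :=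
        integral_mono_of_nonneg (ae_of_all _ fun ω => by positivity)
          (integrable_finset_sum _ fun j _ => (hfint j).div_const τ)
          (ae_of_all _ hpoint')
    _ = ∑ j ∈ Sᶜ, (1 / τ) * ∫ ω, ∫ l, F j l ω ∂μ ∂P := by
        rw [integral_finset_sum _ fun j _ => (hfint j).div_const τ]
        exact Finset.sum_congr rfl fun j _ => by rw [integral_div]; ring
    _ ≤ ∑ _j ∈ Sᶜ, (1 / τ) * ∫ l, g l ∂μ :=
        Finset.sum_le_sum fun j hj => mul_le_mul_of_nonneg_left
          (hIbound j (Finset.mem_compl.mp hj)) (by positivity)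
    _ = (Sᶜ.card : ℝ) * ((1 / τ) * ∫ l, g l ∂μ) := by
        rw [Finset.sum_const, nsmul_eq_mul]
    _ ≤ (p : ℝ) * ((1 / τ) * ∫ l, g l ∂μ) := by
        refine mul_le_mul_of_nonneg_right ?_
          (mul_nonneg (by positivity) (integral_nonneg hg0))
        have : Sᶜ.card ≤ p := by
          simpa using Finset.card_le_univ Sᶜ
        exact_mod_cast this
    _ = (1 / τ) * ∫ l,
          (q l ^ 2 / ((B:ℝ) ^ 2 * p) + 3 * ((B:ℝ) - 1) * q l ^ 4 / ((B:ℝ) ^ 2 * (p:ℝ) ^ 3)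
            + ((B:ℝ) - 1) * ((B:ℝ) - 2) * q l ^ 6 / ((B:ℝ) ^ 2 * (p:ℝ) ^ 5)) ∂μ := by
        have hInt : ∫ l,
            (q l ^ 2 / ((B:ℝ) ^ 2 * p) + 3 * ((B:ℝ) - 1) * q l ^ 4 / ((B:ℝ) ^ 2 * (p:ℝ) ^ 3)
              + ((B:ℝ) - 1) * ((B:ℝ) - 2) * q l ^ 6 / ((B:ℝ) ^ 2 * (p:ℝ) ^ 5)) ∂μ
            = (p : ℝ) * ∫ l, g l ∂μ := by
          rw [← integral_const_mul]
          refine integral_congr_ae (ae_of_all _ fun l => ?_)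
          simp only [hgdef]
          have hBne : (B:ℝ) ≠ 0 := ne_of_gt hB0
          have hpne : (p:ℝ) ≠ 0 := ne_of_gt hp0
          field_simp
        rw [hInt]
        ring
end

section
/- (IPSS whole-function bound) Let τ ∈ (0,1], m, B ≥ 1, and suppose for j ∈ S^c the measurable indicators V_{j,b}(λ), b = 1,...,2B, satisfy P(∀ b ∈ T : V_{j,b}(λ) = 1) ≤ (q(λ)/p)^{|T|} for every nonempty T ⊆ {1,...,2B} with |T| ≤ m and all λ ∈ Λ. With π̂_j(λ) = (1/(2B))∑_{b=1}^{2B} V_{j,b}(λ), the set Ŝ = {j : ∫_Λ π̂_j(λ)^m μ(dλ) ≥ τ} satisfies E|Ŝ ∩ S^c| ≤ (p/(τ (2B)^m)) ∑_{k_1+⋯+k_{2B}=m} (m!/(k_1!⋯k_{2B}!)) ∫_Λ (q(λ)/p)^{∑_b 1(k_b≠0)} μ(dλ). -/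
set_option maxHeartbeats 1000000

open MeasureTheory Finset

lemma aux_integrable_of_mem_Icc {α : Type*} [MeasurableSpace α] (ν : Measure α)
    [IsFiniteMeasure ν] {h : α → ℝ} (hm : AEStronglyMeasurable h ν)
    (hb : ∀ x, h x ∈ Set.Icc (0:ℝ) 1) : Integrable h ν :=
  Integrable.mono' (integrable_const 1) hm (Filter.Eventually.of_forall fun x => by
    rw [Real.norm_eq_abs, abs_of_nonneg (hb x).1]; exact (hb x).2)

open Classical in
/-- IPSS whole-function bound (Theorem S3): with `π̂_j(λ) = (1/(2B)) ∑_{b<2B} V_{j,b}(λ)`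
and joint-selection bounds `P(∀ b ∈ T, V_{j,b}(λ) = 1) ≤ (q(λ)/p)^{|T|}` for nonempty
`T` with `|T| ≤ m`, the selection set `{j : ∫ π̂_j(λ)^m μ(dλ) ≥ τ}` satisfies
`E|Ŝ ∩ S^c| ≤ (p/(τ (2B)^m)) ∑_{k_1+⋯+k_{2B}=m} (m!/(k_1!⋯k_{2B}!)) ∫ (q/p)^{N_k} dμ`. -/
theorem stmt17 {Ω Λ : Type*} [MeasurableSpace Ω] [MeasurableSpace Λ]
    (P : Measure Ω) [IsProbabilityMeasure P]
    (μ : Measure Λ) [IsProbabilityMeasure μ]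
    (p : ℕ) (hp : 1 ≤ p) (S : Finset (Fin p))
    (τ : ℝ) (hτ : τ ∈ Set.Ioc (0:ℝ) 1) (m B : ℕ) (hm : 1 ≤ m) (hB : 1 ≤ B)
    (q : Λ → ℝ) (hqmeas : Measurable q) (hq : ∀ l, q l ∈ Set.Icc (0:ℝ) p)
    (V : Fin p → Fin (2 * B) → Λ → Ω → ℝ)
    (hVmeas : ∀ j b, Measurable fun x : Λ × Ω => V j b x.1 x.2)
    (hV01 : ∀ j b l ω, V j b l ω = 0 ∨ V j b l ω = 1)
    (hjoint : ∀ j ∉ S, ∀ l : Λ, ∀ T : Finset (Fin (2 * B)), T.Nonempty → T.card ≤ m →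
      P {ω | ∀ b ∈ T, V j b l ω = 1} ≤ ENNReal.ofReal ((q l / p) ^ T.card))
    (pihat : Fin p → Λ → Ω → ℝ)
    (hpihat : pihat = fun j l ω => (∑ b, V j b l ω) / (2 * B)) :
    ∫ ω, ((Finset.univ.filter (fun j => j ∉ S ∧
        τ ≤ ∫ l, pihat j l ω ^ m ∂μ)).card : ℝ) ∂P
      ≤ ((p : ℝ) / (τ * (2 * (B:ℝ)) ^ m)) *
          ∑ k ∈ Finset.Nat.antidiagonalTuple (2 * B) m,
            (Nat.multinomial Finset.univ k : ℝ) *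
              ∫ l, (q l / p) ^ ((Finset.univ.filter (fun b => k b ≠ 0)).card) ∂μ := by
  classical
  obtain ⟨hτ0, hτ1⟩ := hτ
  subst hpihat
  rw [← Finset.piAntidiag_univ_fin_eq_antidiagonalTuple m (2 * B)]
  have hp0 : (0:ℝ) < p := by exact_mod_cast hp
  have hB0 : (0:ℝ) < 2 * (B:ℝ) := by positivity
  have hV0 : ∀ j b l ω, 0 ≤ V j b l ω := fun j b l ω => by
    rcases hV01 j b l ω with h | h <;> simp [h]
  have hV1 : ∀ j b l ω, V j b l ω ≤ 1 := fun j b l ω => by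
    rcases hV01 j b l ω with h | h <;> simp [h]
  set g : Fin p → Λ × Ω → ℝ :=
    fun j x => ((∑ b, V j b x.1 x.2) / (2 * (B:ℝ))) ^ m with hgdef
  have hgmeas : ∀ j, Measurable (g j) := fun j =>
    ((Finset.measurable_sum univ fun b _ => hVmeas j b).div_const _).pow_const m
  have hg01 : ∀ j x, g j x ∈ Set.Icc (0:ℝ) 1 := by
    intro j x
    have h1 : 0 ≤ ∑ b, V j b x.1 x.2 := Finset.sum_nonneg fun b _ => hV0 j b _ _
    have h2 : (∑ b, V j b x.1 x.2) ≤ 2 * (B:ℝ) := by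
      calc (∑ b, V j b x.1 x.2) ≤ ∑ _b : Fin (2 * B), (1:ℝ) :=
            Finset.sum_le_sum fun b _ => hV1 j b _ _
        _ = 2 * (B:ℝ) := by simp
    constructor
    · positivity
    · exact pow_le_one₀ (by positivity) ((div_le_one hB0).2 h2)
  set f : Fin p → Ω → ℝ := fun j ω => ∫ l, g j (l, ω) ∂μ with hfdef
  have hfmeas : ∀ j, StronglyMeasurable (f j) := fun j =>
    (hgmeas j).stronglyMeasurable.integral_prod_left'
  have hf01 : ∀ j ω, f j ω ∈ Set.Icc (0:ℝ) 1 := by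
    intro j ω
    constructor
    · exact integral_nonneg fun l => (hg01 j (l, ω)).1
    · calc f j ω ≤ ∫ _l, (1:ℝ) ∂μ := by
            apply integral_mono _ (integrable_const 1) (fun l => (hg01 j (l, ω)).2)
            exact aux_integrable_of_mem_Icc μ
              (((hgmeas j).comp measurable_prodMk_right).aestronglyMeasurable)
              (fun l => hg01 j (l, ω))
        _ = 1 := by simp
  have hfInt : ∀ j, Integrable (f j) P := fun j =>
    aux_integrable_of_mem_Icc P (hfmeas j).aestronglyMeasurable (hf01 j)
  have hAmeas : ∀ j, MeasurableSet {ω | τ ≤ f j ω} := fun j =>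
    measurableSet_le measurable_const (hfmeas j).measurable
  -- rewrite the LHS as a sum of indicator integrals
  have hLHS : ∀ ω, ((univ.filter (fun j => j ∉ S ∧ τ ≤ f j ω)).card : ℝ)
      = ∑ j ∈ univ.filter (fun j => j ∉ S),
          Set.indicator {ω' | τ ≤ f j ω'} (fun _ => (1:ℝ)) ω := by
    intro ω
    rw [← Finset.filter_filter, Finset.card_filter]
    push_cast
    refine Finset.sum_congr rfl fun j hj => ?_
    by_cases h : τ ≤ f j ω <;> simp [Set.indicator_apply, h]
  -- the key probabilistic bound
  set R : ℝ := ∑ k ∈ (univ : Finset (Fin (2 * B))).piAntidiag m,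
      (Nat.multinomial univ k : ℝ) *
        ∫ l, (q l / p) ^ ((univ.filter fun b => k b ≠ 0).card) ∂μ with hRdef
  have hqp01 : ∀ l, q l / p ∈ Set.Icc (0:ℝ) 1 :=
    fun l => ⟨div_nonneg (hq l).1 hp0.le, (div_le_one hp0).2 (hq l).2⟩
  have hqpow01 : ∀ (n : ℕ) (l : Λ), (q l / p) ^ n ∈ Set.Icc (0:ℝ) 1 := fun n l =>
    ⟨pow_nonneg (hqp01 l).1 n, pow_le_one₀ (hqp01 l).1 (hqp01 l).2⟩
  have hqpowInt : ∀ n : ℕ, Integrable (fun l => (q l / p) ^ n) μ := fun n =>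
    aux_integrable_of_mem_Icc μ ((hqmeas.div_const _).pow_const n).aestronglyMeasurable
      (hqpow01 n)
  have hRnonneg : 0 ≤ R := Finset.sum_nonneg fun k _ =>
    mul_nonneg (Nat.cast_nonneg _) (integral_nonneg fun l => (hqpow01 _ l).1)
  have hkey : ∀ j ∉ S, ∫ ω, f j ω ∂P ≤ ((2 * (B:ℝ)) ^ m)⁻¹ * R := by
    intro j hj
    have hgInt : Integrable (Function.uncurry fun ω l => g j (l, ω)) (P.prod μ) := by
      have hmeas : AEStronglyMeasurable (Function.uncurry fun (ω : Ω) (l : Λ) => g j (l, ω))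
          (P.prod μ) := ((hgmeas j).comp measurable_swap).aestronglyMeasurable
      exact aux_integrable_of_mem_Icc _ hmeas fun x => hg01 j (x.2, x.1)
    have hswap : ∫ ω, f j ω ∂P = ∫ l, ∫ ω, g j (l, ω) ∂P ∂μ :=
      integral_integral_swap hgInt
    rw [hswap]
    -- pointwise in l
    have hpt : ∀ l, ∫ ω, g j (l, ω) ∂P ≤ ((2 * (B:ℝ)) ^ m)⁻¹ *
        ∑ k ∈ (univ : Finset (Fin (2 * B))).piAntidiag m,
          (Nat.multinomial univ k : ℝ) * (q l / p) ^ ((univ.filter fun b => k b ≠ 0).card) := by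
      intro l
      have hVbmeas : ∀ b, Measurable fun ω => V j b l ω := fun b =>
        (hVmeas j b).comp measurable_prodMk_left
      have hexp : ∀ ω, g j (l, ω) = ((2 * (B:ℝ)) ^ m)⁻¹ *
          ∑ k ∈ (univ : Finset (Fin (2 * B))).piAntidiag m,
            (Nat.multinomial univ k : ℝ) * ∏ b, V j b l ω ^ k b := by
        intro ω
        simp only [hgdef]
        rw [div_pow, Finset.sum_pow_eq_sum_piAntidiag, div_eq_mul_inv, mul_comm]
      have hprodInt : ∀ k : Fin (2 * B) → ℕ,
          Integrable (fun ω => ∏ b, V j b l ω ^ k b) P := by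
        intro k
        apply aux_integrable_of_mem_Icc _ _
          (fun ω => ⟨Finset.prod_nonneg fun b _ => pow_nonneg (hV0 j b l ω) _,
            Finset.prod_le_one (fun b _ => pow_nonneg (hV0 j b l ω) _)
              (fun b _ => pow_le_one₀ (hV0 j b l ω) (hV1 j b l ω))⟩)
        exact (Finset.measurable_prod univ fun b _ =>
          (hVbmeas b).pow_const (k b)).aestronglyMeasurable
      have hterm : ∀ k ∈ (univ : Finset (Fin (2 * B))).piAntidiag m,
          ∫ ω, ∏ b, V j b l ω ^ k b ∂P ≤
            (q l / p) ^ ((univ.filter fun b => k b ≠ 0).card) := by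
        intro k hk
        have hksum : ∑ b, k b = m := (Finset.mem_piAntidiag.mp hk).1
        set T : Finset (Fin (2 * B)) := univ.filter fun b => k b ≠ 0 with hTdef
        have hTne : T.Nonempty := by
          by_contra h
          rw [Finset.not_nonempty_iff_eq_empty] at h
          have hall : ∀ b, k b = 0 := by
            intro b
            by_contra hb
            have : b ∈ T := Finset.mem_filter.2 ⟨Finset.mem_univ b, hb⟩
            simp [h] at this
          rw [Finset.sum_congr rfl fun b _ => hall b] at hksum
          simp at hksum
          omega
        have hTcard : T.card ≤ m := by
          calc T.card = ∑ _b ∈ T, 1 := by simp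
            _ ≤ ∑ b ∈ T, k b := Finset.sum_le_sum fun b hb =>
                Nat.one_le_iff_ne_zero.2 (Finset.mem_filter.mp hb).2
            _ ≤ ∑ b, k b := Finset.sum_le_sum_of_subset (Finset.subset_univ T)
            _ = m := hksum
        have hprod : ∀ ω, (∏ b, V j b l ω ^ k b)
            = Set.indicator {ω' | ∀ b ∈ T, V j b l ω' = 1} (fun _ => (1:ℝ)) ω := by
          intro ω
          rw [Set.indicator_apply]
          simp only [Set.mem_setOf_eq]
          by_cases hall : ∀ b ∈ T, V j b l ω = 1
          · rw [if_pos hall]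
            apply Finset.prod_eq_one
            intro b _
            by_cases hb : k b = 0
            · simp [hb]
            · rw [hall b (Finset.mem_filter.2 ⟨Finset.mem_univ b, hb⟩), one_pow]
          · rw [if_neg hall]
            push_neg at hall
            obtain ⟨b, hbT, hb1⟩ := hall
            have hb0 : V j b l ω = 0 := (hV01 j b l ω).resolve_right hb1
            exact Finset.prod_eq_zero (Finset.mem_univ b)
              (by rw [hb0]; exact zero_pow (Finset.mem_filter.mp hbT).2)
        have hsetmeas : MeasurableSet {ω' | ∀ b ∈ T, V j b l ω' = 1} := by
          have hset : {ω' | ∀ b ∈ T, V j b l ω' = 1}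
              = ⋂ b ∈ (T : Set (Fin (2 * B))), (fun ω' => V j b l ω') ⁻¹' {1} := by
            ext ω'; simp
          rw [hset]
          exact MeasurableSet.biInter T.countable_toSet fun b _ =>
            (hVbmeas b) (measurableSet_singleton 1)
        calc ∫ ω, ∏ b, V j b l ω ^ k b ∂P
            = (P {ω' | ∀ b ∈ T, V j b l ω' = 1}).toReal := by
              simp_rw [hprod]
              rw [integral_indicator_const (1:ℝ) hsetmeas, smul_eq_mul, mul_one, measureReal_def]
          _ ≤ (q l / p) ^ T.card :=
              ENNReal.toReal_le_of_le_ofReal (pow_nonneg (hqp01 l).1 _)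
                (hjoint j hj l T hTne hTcard)
      calc ∫ ω, g j (l, ω) ∂P
          = ((2 * (B:ℝ)) ^ m)⁻¹ * ∑ k ∈ (univ : Finset (Fin (2 * B))).piAntidiag m,
              (Nat.multinomial univ k : ℝ) * ∫ ω, ∏ b, V j b l ω ^ k b ∂P := by
            simp_rw [hexp]
            rw [integral_const_mul, integral_finset_sum _
              (fun k _ => (hprodInt k).const_mul _)]
            congr 1
            exact Finset.sum_congr rfl fun k _ => integral_const_mul _ _
        _ ≤ _ := by
            apply mul_le_mul_of_nonneg_left _ (by positivity)
            exact Finset.sum_le_sum fun k hk => mul_le_mul_of_nonneg_left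
              (hterm k hk) (Nat.cast_nonneg _)
    -- integrate the pointwise bound over l
    have hint1 : Integrable (fun l => ∫ ω, g j (l, ω) ∂P) μ := by
      apply aux_integrable_of_mem_Icc _ ((hgmeas j).stronglyMeasurable.integral_prod_right').aestronglyMeasurable
      intro l
      constructor
      · exact integral_nonneg fun ω => (hg01 j (l, ω)).1
      · calc (∫ ω, g j (l, ω) ∂P) ≤ ∫ _ω, (1:ℝ) ∂P := by
              apply integral_mono _ (integrable_const 1) (fun ω => (hg01 j (l, ω)).2)
              exact aux_integrable_of_mem_Icc P
                (((hgmeas j).comp measurable_prodMk_left).aestronglyMeasurable)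
                (fun ω => hg01 j (l, ω))
          _ = 1 := by simp
    have hint2 : Integrable (fun l => ((2 * (B:ℝ)) ^ m)⁻¹ *
        ∑ k ∈ (univ : Finset (Fin (2 * B))).piAntidiag m,
          (Nat.multinomial univ k : ℝ) *
            (q l / p) ^ ((univ.filter fun b => k b ≠ 0).card)) μ := by
      apply Integrable.const_mul
      apply integrable_finset_sum
      intro k _
      exact (hqpowInt _).const_mul _
    calc ∫ l, ∫ ω, g j (l, ω) ∂P ∂μ
        ≤ ∫ l, ((2 * (B:ℝ)) ^ m)⁻¹ *
            ∑ k ∈ (univ : Finset (Fin (2 * B))).piAntidiag m,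
              (Nat.multinomial univ k : ℝ) *
                (q l / p) ^ ((univ.filter fun b => k b ≠ 0).card) ∂μ :=
          integral_mono hint1 hint2 hpt
      _ = ((2 * (B:ℝ)) ^ m)⁻¹ * R := by
          rw [integral_const_mul, integral_finset_sum _
            (fun k _ => (hqpowInt _).const_mul _)]
          congr 1
          exact Finset.sum_congr rfl fun k _ => integral_const_mul _ _
  -- assemble
  have hMarkov : ∀ j ∉ S, (P {ω | τ ≤ f j ω}).toReal
      ≤ τ⁻¹ * (((2 * (B:ℝ)) ^ m)⁻¹ * R) := by
    intro j hj
    have h1 := mul_meas_ge_le_integral_of_nonneg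
      (Filter.Eventually.of_forall fun ω => (hf01 j ω).1) (hfInt j) τ
    have h2 : τ * (P {ω | τ ≤ f j ω}).toReal ≤ ((2 * (B:ℝ)) ^ m)⁻¹ * R :=
      h1.trans (hkey j hj)
    calc (P {ω | τ ≤ f j ω}).toReal = τ⁻¹ * (τ * (P {ω | τ ≤ f j ω}).toReal) := by
          field_simp
      _ ≤ τ⁻¹ * (((2 * (B:ℝ)) ^ m)⁻¹ * R) :=
          mul_le_mul_of_nonneg_left h2 (inv_nonneg.2 hτ0.le)
  calc ∫ ω, ((univ.filter (fun j => j ∉ S ∧ τ ≤ f j ω)).card : ℝ) ∂P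
      = ∑ j ∈ univ.filter (fun j => j ∉ S), (P {ω' | τ ≤ f j ω'}).toReal := by
        simp_rw [hLHS]
        rw [integral_finset_sum _ (fun j _ => (integrable_const (1:ℝ)).indicator (hAmeas j))]
        exact Finset.sum_congr rfl fun j _ => by
          rw [integral_indicator_const (1:ℝ) (hAmeas j), smul_eq_mul, mul_one, measureReal_def]
    _ ≤ ∑ _j ∈ univ.filter (fun j => j ∉ S), τ⁻¹ * (((2 * (B:ℝ)) ^ m)⁻¹ * R) :=
        Finset.sum_le_sum fun j hj => hMarkov j (Finset.mem_filter.mp hj).2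
    _ = (univ.filter (fun j => j ∉ S)).card * (τ⁻¹ * (((2 * (B:ℝ)) ^ m)⁻¹ * R)) := by
        rw [Finset.sum_const, nsmul_eq_mul]
    _ ≤ (p : ℝ) * (τ⁻¹ * (((2 * (B:ℝ)) ^ m)⁻¹ * R)) := by
        apply mul_le_mul_of_nonneg_right _ (by positivity)
        have : (univ.filter (fun j => j ∉ S)).card ≤ p := by
          calc (univ.filter (fun j => j ∉ S)).card ≤ (univ : Finset (Fin p)).card :=
              Finset.card_filter_le _ _
            _ = p := by simp
        exact_mod_cast this
    _ = ((p : ℝ) / (τ * (2 * (B:ℝ)) ^ m)) * R := by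
        rw [div_eq_mul_inv, mul_inv]
        ring
end
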